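/- arXiv:1210.5493 — 4 statements merged into one kernel-verified Lean document; each statement's English description precedes it below -/
import Mathlib

section
/- Let A⁰ be an n×n real matrix that is asymptotically stable in the sense that there exist constants β₀, ρ₀ > 0 with ‖exp(tA⁰)‖ ≤ β₀ e^{−ρ₀ t} for all t ≥ 0. Let A : [0,∞) → ℝ^{n×n} be continuous and bounded with A(t) → A⁰ as t → ∞, and let Φ be the fundamental matrix of the time-varying system ẋ(t) = A(t)x(t). Then the time-varying system is exponentially stable: there exist constants ρ > 0 and 0 < β < ∞ such that ‖Φ(t,s)‖ ≤ β e^{−ρ(t−s)} for all 0 ≤ s ≤ t. -/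
open MeasureTheory Filter

lemma gronwall_int {s t B : ℝ} (hst : s ≤ t) {ψ g : ℝ → ℝ}
    (hψc : ContinuousOn ψ (Set.Icc s t)) (hgc : ContinuousOn g (Set.Icc s t))
    (hg0 : ∀ τ ∈ Set.Icc s t, 0 ≤ g τ)
    (h : ∀ τ ∈ Set.Icc s t, ψ τ ≤ B + ∫ σ in s..τ, g σ * ψ σ) :
    ψ t ≤ B * Real.exp (∫ σ in s..t, g σ) := by
  have hgψc : ContinuousOn (fun σ => g σ * ψ σ) (Set.Icc s t) := hgc.mul hψc
  set H : ℝ → ℝ := fun τ => B + ∫ σ in s..τ, g σ * ψ σ with hH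
  set G : ℝ → ℝ := fun τ => ∫ σ in s..τ, g σ with hG
  set F : ℝ → ℝ := fun τ => H τ * Real.exp (-G τ) with hF
  have hgint : IntegrableOn g (Set.uIcc s t) := by
    rw [Set.uIcc_of_le hst]; exact hgc.integrableOn_compact isCompact_Icc
  have hgψint : IntegrableOn (fun σ => g σ * ψ σ) (Set.uIcc s t) := by
    rw [Set.uIcc_of_le hst]; exact hgψc.integrableOn_compact isCompact_Icc
  have hHc : ContinuousOn H (Set.Icc s t) := by
    rw [← Set.uIcc_of_le hst] at hgψc ⊢
    exact continuousOn_const.add (intervalIntegral.continuousOn_primitive_interval hgψint)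
  have hGc : ContinuousOn G (Set.Icc s t) := by
    rw [← Set.uIcc_of_le hst]
    exact intervalIntegral.continuousOn_primitive_interval hgint
  have hFc : ContinuousOn F (Set.Icc s t) :=
    hHc.mul ((Real.continuous_exp.comp_continuousOn hGc.neg))
  have key : ∀ τ ∈ Set.Ioo s t, HasDerivAt F ((g τ * ψ τ - g τ * H τ) * Real.exp (-G τ)) τ := by
    intro τ hτ
    have hτI : τ ∈ Set.Icc s t := Set.mem_Icc_of_Ioo hτ
    have hnhds : Set.Icc s t ∈ nhds τ := Icc_mem_nhds hτ.1 hτ.2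
    have hca : ∀ {f : ℝ → ℝ}, ContinuousOn f (Set.Icc s t) → ContinuousAt f τ := by
      intro f hf; exact hf.continuousAt hnhds
    have hsub : Set.uIcc s τ ⊆ Set.uIcc s t := by
      rw [Set.uIcc_of_le hst, Set.uIcc_of_le hτI.1]
      exact Set.Icc_subset_Icc le_rfl hτI.2
    have hHd : HasDerivAt H (g τ * ψ τ) τ := by
      refine HasDerivAt.const_add _ ?_
      refine intervalIntegral.integral_hasDerivAt_right ((hgψint.mono_set hsub).intervalIntegrable)
        (ContinuousOn.stronglyMeasurableAtFilter isOpen_Ioo (hgψc.mono Set.Ioo_subset_Icc_self) τ hτ) (hca hgψc)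
    have hGd : HasDerivAt G (g τ) τ := by
      refine intervalIntegral.integral_hasDerivAt_right ((hgint.mono_set hsub).intervalIntegrable)
        (ContinuousOn.stronglyMeasurableAtFilter isOpen_Ioo (hgc.mono Set.Ioo_subset_Icc_self) τ hτ) (hca hgc)
    have := hHd.mul (((hGd.neg).exp))
    refine this.congr_deriv ?_
    rw [Pi.neg_apply]
    ring
  have hanti : AntitoneOn F (Set.Icc s t) := by
    apply antitoneOn_of_deriv_nonpos (convex_Icc s t) hFc
    · rw [interior_Icc]
      intro τ hτ
      exact ((key τ hτ).differentiableAt).differentiableWithinAt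
    · rw [interior_Icc]
      intro τ hτ
      rw [(key τ hτ).deriv]
      have hτI : τ ∈ Set.Icc s t := Set.mem_Icc_of_Ioo hτ
      have h1 : ψ τ ≤ H τ := h τ hτI
      have h2 : 0 ≤ g τ := hg0 τ hτI
      have : g τ * ψ τ - g τ * H τ ≤ 0 := by nlinarith
      exact mul_nonpos_of_nonpos_of_nonneg this (Real.exp_nonneg _)
  have hFs : F s = B := by
    simp [hF, hH, hG, intervalIntegral.integral_same]
  have hFt : F t ≤ B := by
    have := hanti (Set.left_mem_Icc.2 hst) (Set.right_mem_Icc.2 hst) hst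
    rwa [hFs] at this
  have hψt : ψ t ≤ H t := h t (Set.right_mem_Icc.2 hst)
  calc ψ t ≤ H t := hψt
    _ = F t * Real.exp (G t) := by
        show H t = H t * Real.exp (-G t) * Real.exp (G t)
        rw [mul_assoc, ← Real.exp_add]; simp
    _ ≤ B * Real.exp (G t) := by
        exact mul_le_mul_of_nonneg_right hFt (Real.exp_nonneg _)

set_option maxHeartbeats 1000000 in
set_option synthInstance.maxHeartbeats 200000 in
/-- If `A⁰` is exponentially (asymptotically) stable and the bounded continuous
time-varying matrix `A(t)` converges to `A⁰` as `t → ∞`, then the fundamental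
matrix `Φ(t,s)` of `ẋ = A(t) x` is exponentially stable:
`‖Φ(t,s)‖ ≤ β e^{-ρ (t - s)}` for all `0 ≤ s ≤ t`. -/
theorem stmt_0 {n : ℕ}
    (A0 : EuclideanSpace ℝ (Fin n) →L[ℝ] EuclideanSpace ℝ (Fin n))
    (β0 ρ0 : ℝ) (hβ0 : 0 < β0) (hρ0 : 0 < ρ0)
    (hstab : ∀ t : ℝ, 0 ≤ t → ‖NormedSpace.exp (t • A0)‖ ≤ β0 * Real.exp (-ρ0 * t))
    (A : ℝ → (EuclideanSpace ℝ (Fin n) →L[ℝ] EuclideanSpace ℝ (Fin n)))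
    (hAcont : ContinuousOn A (Set.Ici (0 : ℝ)))
    (hAbdd : ∃ C : ℝ, ∀ t : ℝ, 0 ≤ t → ‖A t‖ ≤ C)
    (hAconv : Tendsto A atTop (nhds A0))
    (Φ : ℝ → ℝ → (EuclideanSpace ℝ (Fin n) →L[ℝ] EuclideanSpace ℝ (Fin n)))
    (hΦinit : ∀ s : ℝ, 0 ≤ s → Φ s s = 1)
    (hΦderiv : ∀ s : ℝ, 0 ≤ s → ∀ t : ℝ, s ≤ t →
      HasDerivAt (fun τ => Φ τ s) ((A t).comp (Φ t s)) t) :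
    ∃ ρ : ℝ, 0 < ρ ∧ ∃ β : ℝ, 0 < β ∧
      ∀ s t : ℝ, 0 ≤ s → s ≤ t → ‖Φ t s‖ ≤ β * Real.exp (-ρ * (t - s)) := by
  obtain ⟨C, hC⟩ := hAbdd
  set ε : ℝ := ρ0 / (2 * β0) with hεdef
  have hεpos : 0 < ε := by positivity
  obtain ⟨T₀, hT₀⟩ := (Metric.tendsto_atTop.1 hAconv ε hεpos)
  set T : ℝ := max T₀ 0 with hTdef
  have hT0 : (0:ℝ) ≤ T := le_max_right _ _
  set M : ℝ := C + ‖A0‖ with hMdef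
  set g : ℝ → ℝ := fun τ => ‖A τ - A0‖ with hgdef
  have hg_le : ∀ τ : ℝ, 0 ≤ τ → g τ ≤ M :=
    fun τ h => (norm_sub_le _ _).trans (add_le_add_left (hC τ h) _)
  have hM0 : (0:ℝ) ≤ M := le_trans (norm_nonneg (A 0 - A0)) (hg_le 0 le_rfl)
  have hgε : ∀ τ : ℝ, T ≤ τ → g τ ≤ ε := by
    intro τ h
    have := hT₀ τ (le_trans (le_max_left _ _) h)
    rw [dist_eq_norm] at this
    exact this.le
  have hgcont : ContinuousOn g (Set.Ici (0:ℝ)) := (hAcont.sub continuousOn_const).norm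
  refine ⟨ρ0 / 2, by positivity, β0 * Real.exp (β0 * (M * T)), by positivity, ?_⟩
  intro s t hs hst
  -- continuity of Φ · s
  have hΦca : ∀ τ : ℝ, s ≤ τ → ContinuousAt (fun τ => Φ τ s) τ :=
    fun τ h => (hΦderiv s hs τ h).continuousAt
  have hΦcOn : ∀ r : ℝ, ContinuousOn (fun τ => Φ τ s) (Set.Icc s r) :=
    fun r τ hτ => (hΦca τ hτ.1).continuousWithinAt
  have hIccsub : ∀ r : ℝ, Set.Icc s r ⊆ Set.Ici (0:ℝ) :=
    fun r τ hτ => le_trans hs hτ.1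
  set ψ : ℝ → ℝ := fun τ => Real.exp (ρ0 * (τ - s)) * ‖Φ τ s‖ with hψdef
  have hψc : ContinuousOn ψ (Set.Icc s t) :=
    ((Real.continuous_exp.comp (continuous_const.mul (continuous_id.sub continuous_const))).continuousOn).mul (hΦcOn t).norm
  -- key integral inequality
  have key : ∀ r ∈ Set.Icc s t, ψ r ≤ β0 + ∫ σ in s..r, (β0 * g σ) * ψ σ := by
    intro r hr
    obtain ⟨hsr, hrt⟩ := hr
    set E : ℝ → (EuclideanSpace ℝ (Fin n) →L[ℝ] EuclideanSpace ℝ (Fin n)) :=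
      fun τ => NormedSpace.exp ((r - τ) • A0) with hEdef
    have hEc : Continuous E := by
      letI : NormedAlgebra ℚ (EuclideanSpace ℝ (Fin n) →L[ℝ] EuclideanSpace ℝ (Fin n)) :=
        .restrictScalars ℚ ℝ _
      exact NormedSpace.exp_continuous.comp ((continuous_const.sub continuous_id).smul continuous_const)
    have hEd : ∀ τ : ℝ, HasDerivAt E (-(E τ * A0)) τ := by
      intro τ
      have h1 := hasDerivAt_exp_smul_const (𝕂 := ℝ) A0 (r - τ)
      have h2 : HasDerivAt (fun u : ℝ => r - u) (-1) τ := (hasDerivAt_id τ).const_sub r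
      have h3 := h1.scomp τ h2
      simp only [neg_one_smul] at h3
      exact h3
    have hFTC : (∫ τ in s..r, E τ * ((A τ - A0) * Φ τ s))
        = Φ r s - NormedSpace.exp ((r - s) • A0) := by
      have hderiv : ∀ τ ∈ Set.uIcc s r,
          HasDerivAt (fun τ => E τ * Φ τ s) (E τ * ((A τ - A0) * Φ τ s)) τ := by
        intro τ hτ
        rw [Set.uIcc_of_le hsr] at hτ
        have h1 := (hEd τ).mul (hΦderiv s hs τ hτ.1)
        have h2 : (A τ).comp (Φ τ s) = A τ * Φ τ s := rfl
        have h3 : -(E τ * A0) * Φ τ s + E τ * (A τ * Φ τ s)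
            = E τ * ((A τ - A0) * Φ τ s) := by
          ext x
          simp
          abel
        rw [h2, h3] at h1
        exact h1
      have hint : IntervalIntegrable (fun τ => E τ * ((A τ - A0) * Φ τ s)) volume s r := by
        apply ContinuousOn.intervalIntegrable
        rw [Set.uIcc_of_le hsr]
        exact hEc.continuousOn.mul
          (((hAcont.mono (hIccsub r)).sub continuousOn_const).mul (hΦcOn r))
      rw [intervalIntegral.integral_eq_sub_of_hasDerivAt hderiv hint]
      have e1 : E r = 1 := by
        show NormedSpace.exp ((r - r) • A0) = 1
        rw [sub_self, show (0:ℝ) • A0 = 0 from zero_smul ℝ A0, NormedSpace.exp_zero]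
      have e2 : Φ s s = 1 := hΦinit s hs
      rw [e1, e2, one_mul, mul_one]
    have hnorm : ‖Φ r s‖ ≤ β0 * Real.exp (-ρ0 * (r - s))
        + ∫ τ in s..r, β0 * Real.exp (-ρ0 * (r - τ)) * (g τ * ‖Φ τ s‖) := by
      have h1 : Φ r s = NormedSpace.exp ((r - s) • A0)
          + ∫ τ in s..r, E τ * ((A τ - A0) * Φ τ s) := by
        rw [hFTC]; abel
      rw [h1]
      refine (norm_add_le _ _).trans (add_le_add (hstab (r - s) (by linarith)) ?_)
      have hbint : IntervalIntegrable
          (fun τ => β0 * Real.exp (-ρ0 * (r - τ)) * (g τ * ‖Φ τ s‖)) volume s r := by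
        apply ContinuousOn.intervalIntegrable
        rw [Set.uIcc_of_le hsr]
        exact (continuous_const.mul (Real.continuous_exp.comp
          (continuous_const.mul (continuous_const.sub continuous_id)))).continuousOn.mul
          ((hgcont.mono (hIccsub r)).mul (hΦcOn r).norm)
      refine le_trans (intervalIntegral.norm_integral_le_of_norm_le hsr ?_ hbint) le_rfl
      · refine Filter.Eventually.of_forall ?_
        intro τ hτ
        calc ‖E τ * ((A τ - A0) * Φ τ s)‖
            ≤ ‖E τ‖ * (‖A τ - A0‖ * ‖Φ τ s‖) :=
              (norm_mul_le _ _).trans (by gcongr; exact norm_mul_le _ _)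
          _ ≤ β0 * Real.exp (-ρ0 * (r - τ)) * (g τ * ‖Φ τ s‖) := by
              gcongr
              exact hstab (r - τ) (by linarith [hτ.2])
    have h2 := mul_le_mul_of_nonneg_left hnorm (Real.exp_nonneg (ρ0 * (r - s)))
    refine h2.trans_eq ?_
    rw [mul_add, ← intervalIntegral.integral_const_mul]
    congr 1
    · calc Real.exp (ρ0 * (r - s)) * (β0 * Real.exp (-ρ0 * (r - s)))
          = β0 * Real.exp (ρ0 * (r - s) + -ρ0 * (r - s)) := by rw [Real.exp_add]; ring
        _ = β0 := by norm_num
    · apply intervalIntegral.integral_congr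
      intro σ _
      show Real.exp (ρ0 * (r - s)) * (β0 * Real.exp (-ρ0 * (r - σ)) * (g σ * ‖Φ σ s‖))
          = (β0 * g σ) * (Real.exp (ρ0 * (σ - s)) * ‖Φ σ s‖)
      rw [show ρ0 * (σ - s) = ρ0 * (r - s) + -ρ0 * (r - σ) by ring, Real.exp_add]
      ring
  -- Gronwall
  have hgc' : ContinuousOn (fun σ => β0 * g σ) (Set.Icc s t) :=
    continuousOn_const.mul (hgcont.mono (hIccsub t))
  have hgron := gronwall_int hst hψc hgc'
    (fun τ _ => by positivity) key
  -- bound the integral of g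
  have hint_g : ∀ a b : ℝ, s ≤ a → a ≤ b → IntervalIntegrable g volume a b := by
    intro a b ha hab
    apply ContinuousOn.intervalIntegrable
    rw [Set.uIcc_of_le hab]
    exact hgcont.mono (fun τ hτ => le_trans (le_trans hs ha) hτ.1)
  have hgbound : (∫ σ in s..t, g σ) ≤ M * T + ε * (t - s) := by
    set T' : ℝ := max s (min t T) with hT'def
    have hsT' : s ≤ T' := le_max_left _ _
    have hT't : T' ≤ t := max_le hst (min_le_left _ _)
    have hint1 := hint_g s T' le_rfl hsT'
    have hint2 := hint_g T' t hsT' hT't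
    rw [← intervalIntegral.integral_add_adjacent_intervals hint1 hint2]
    have h1 : (∫ σ in s..T', g σ) ≤ M * T := by
      calc (∫ σ in s..T', g σ) ≤ ∫ _ in s..T', M :=
            intervalIntegral.integral_mono_on hsT' hint1 intervalIntegrable_const
              (fun σ hσ => hg_le σ (le_trans hs hσ.1))
        _ = (T' - s) * M := by rw [intervalIntegral.integral_const, smul_eq_mul]
        _ ≤ T * M := by
            have : T' - s ≤ T := by
              have h1 : T' ≤ s + T := max_le (by linarith) (le_trans (min_le_right _ _) (by linarith))
              linarith
            exact mul_le_mul_of_nonneg_right this hM0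
        _ = M * T := mul_comm _ _
    have h2 : (∫ σ in T'..t, g σ) ≤ ε * (t - s) := by
      rcases le_total T t with h | h
      · have hTT' : T ≤ T' := by
          rw [hT'def, min_eq_right h]
          exact le_max_right _ _
        calc (∫ σ in T'..t, g σ) ≤ ∫ _ in T'..t, ε :=
              intervalIntegral.integral_mono_on hT't hint2 intervalIntegrable_const
                (fun σ hσ => hgε σ (le_trans hTT' hσ.1))
          _ = (t - T') * ε := by rw [intervalIntegral.integral_const, smul_eq_mul]
          _ ≤ (t - s) * ε := mul_le_mul_of_nonneg_right (by linarith) hεpos.le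
          _ = ε * (t - s) := mul_comm _ _
      · have hT'eq : T' = t := by
          rw [hT'def, min_eq_left h, max_eq_right hst]
        rw [hT'eq, intervalIntegral.integral_same]
        exact mul_nonneg hεpos.le (by linarith)
    linarith
  have hIeq : (∫ σ in s..t, β0 * g σ) = β0 * ∫ σ in s..t, g σ :=
    intervalIntegral.integral_const_mul _ _
  have hψfinal : ψ t ≤ β0 * Real.exp (β0 * (M * T + ε * (t - s))) := by
    refine hgron.trans ?_
    refine mul_le_mul_of_nonneg_left (Real.exp_le_exp.2 ?_) hβ0.le
    rw [hIeq]
    exact mul_le_mul_of_nonneg_left hgbound hβ0.le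
  have hΦeq : ‖Φ t s‖ = Real.exp (-(ρ0 * (t - s))) * ψ t := by
    rw [hψdef]
    rw [← mul_assoc, ← Real.exp_add]
    simp
  rw [hΦeq]
  calc Real.exp (-(ρ0 * (t - s))) * ψ t
      ≤ Real.exp (-(ρ0 * (t - s))) * (β0 * Real.exp (β0 * (M * T + ε * (t - s)))) :=
        mul_le_mul_of_nonneg_left hψfinal (Real.exp_nonneg _)
    _ = β0 * Real.exp (β0 * (M * T)) * Real.exp (-(ρ0 / 2) * (t - s)) := by
        have hε2 : β0 * ε = ρ0 / 2 := by
          rw [hεdef]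
          field_simp
        have e : Real.exp (-(ρ0 * (t - s))) * Real.exp (β0 * (M * T + ε * (t - s)))
            = Real.exp (β0 * (M * T) + -(ρ0 / 2) * (t - s)) := by
          rw [← Real.exp_add]
          congr 1
          linear_combination (t - s) * hε2
        rw [Real.exp_add] at e
        calc Real.exp (-(ρ0 * (t - s))) * (β0 * Real.exp (β0 * (M * T + ε * (t - s))))
            = β0 * (Real.exp (-(ρ0 * (t - s))) * Real.exp (β0 * (M * T + ε * (t - s)))) := by ring
          _ = β0 * Real.exp (β0 * (M * T)) * Real.exp (-(ρ0 / 2) * (t - s)) := by rw [e]; ring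
end

section
/- Let A⁰ be an n×n real matrix that is asymptotically stable in the sense that there exist constants β₀, ρ₀ > 0 with ‖exp(tA⁰)‖ ≤ β₀ e^{−ρ₀ t} for all t ≥ 0. Let A : [0,∞) → ℝ^{n×n} be continuous and bounded with A(t) → A⁰ as t → ∞, let Φ be the fundamental matrix of ẋ(t) = A(t)x(t), and fix t₀ ≥ 0. Then lim_{T→∞} (1/T) ∫_{t₀}^{T} ‖Φ(t,t₀) − exp((t−t₀)A⁰)‖² dt = 0. -/
open MeasureTheory Filter

private lemma ftc_cont {f : ℝ → ℝ} (hf : Continuous f) (a t : ℝ) :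
    HasDerivAt (fun x => ∫ s in a..x, f s) (f t) t :=
  intervalIntegral.integral_hasDerivAt_right (hf.intervalIntegrable a t)
    (hf.stronglyMeasurableAtFilter _ _) hf.continuousAt

private lemma gronwall_int_s1 {u e : ℝ → ℝ} {a c K : ℝ}
    (hu : Continuous u) (he : Continuous e)
    (hen : ∀ t, a ≤ t → 0 ≤ e t) (hK : 0 ≤ K) (hc : 0 ≤ c)
    (h : ∀ t, a ≤ t → u t ≤ c + K * ∫ τ in a..t, e τ * u τ) :
    ∀ t, a ≤ t → u t ≤ c * Real.exp (K * ∫ τ in a..t, e τ) := by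
  set V : ℝ → ℝ := fun t => c + K * ∫ τ in a..t, e τ * u τ with hVdef
  set En : ℝ → ℝ := fun t => ∫ τ in a..t, e τ with hEndef
  set G : ℝ → ℝ := fun t => V t * Real.exp (-(K * En t)) with hGdef
  have hVd : ∀ t, HasDerivAt V (K * (e t * u t)) t := fun t =>
    ((ftc_cont (he.mul hu) a t).const_mul K).const_add c
  have hEd : ∀ t, HasDerivAt En (e t) t := fun t => ftc_cont he a t
  have hGd : ∀ t, HasDerivAt G
      (K * (e t * u t) * Real.exp (-(K * En t)) +
        V t * (Real.exp (-(K * En t)) * (-(K * e t)))) t := by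
    intro t
    have h1 : HasDerivAt (fun t => Real.exp (-(K * En t)))
        (Real.exp (-(K * En t)) * (-(K * e t))) t :=
      (Real.hasDerivAt_exp _).comp t (((hEd t).const_mul K).neg)
    exact (hVd t).mul h1
  have hanti : AntitoneOn G (Set.Ici a) := by
    apply antitoneOn_of_deriv_nonpos (convex_Ici a)
    · exact fun t _ => ((hGd t).differentiableAt.continuousAt).continuousWithinAt
    · exact fun t _ => ((hGd t).differentiableAt).differentiableWithinAt
    · intro t ht
      rw [interior_Ici] at ht
      rw [(hGd t).deriv]
      have hut : u t ≤ V t := h t (le_of_lt ht)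
      have hE : (0:ℝ) < Real.exp (-(K * En t)) := Real.exp_pos _
      have het : 0 ≤ e t := hen t ht.le
      nlinarith [mul_le_mul_of_nonneg_left hut (mul_nonneg (mul_nonneg hK het) hE.le)]
  intro t ht
  have hGa : G t ≤ G a := hanti (Set.mem_Ici.mpr le_rfl) (Set.mem_Ici.mpr ht) ht
  have hGa0 : G a = c := by simp [hGdef, hVdef, hEndef, intervalIntegral.integral_same]
  rw [hGa0] at hGa
  have hVle : V t ≤ c * Real.exp (K * En t) := by
    calc V t = V t * Real.exp (-(K * En t)) * Real.exp (K * En t) := by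
          rw [mul_assoc, ← Real.exp_add]; simp
      _ ≤ c * Real.exp (K * En t) :=
          mul_le_mul_of_nonneg_right hGa (Real.exp_pos _).le
  exact (h t ht).trans hVle

private lemma cesaro_int {f : ℝ → ℝ} {a : ℝ} (ha : 0 ≤ a)
    (hf : ContinuousOn f (Set.Ici a))
    (h0 : ∀ t, a ≤ t → 0 ≤ f t) (hlim : Tendsto f atTop (nhds 0)) :
    Tendsto (fun T : ℝ => (1 / T) * ∫ t in a..T, f t) atTop (nhds 0) := by
  rw [Metric.tendsto_atTop]
  intro ε hε
  obtain ⟨t₁', ht₁'⟩ := Metric.tendsto_atTop.mp hlim (ε / 2) (by positivity)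
  set t₁ := max t₁' a with ht₁def
  have hat₁ : a ≤ t₁ := le_max_right _ _
  set M := ∫ t in a..t₁, f t with hMdef
  have hM0 : 0 ≤ M := intervalIntegral.integral_nonneg hat₁ (fun x hx => h0 x hx.1)
  refine ⟨max (max t₁ 1) (2 * M / ε + 1), fun T hT => ?_⟩
  have hT1 : (1:ℝ) ≤ T := le_trans (le_trans (le_max_right t₁ 1) (le_max_left _ _)) hT
  have hT0 : (0:ℝ) < T := lt_of_lt_of_le one_pos hT1
  have hTt₁ : t₁ ≤ T := le_trans (le_trans (le_max_left t₁ 1) (le_max_left _ _)) hT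
  have hTa : a ≤ T := hat₁.trans hTt₁
  have hTM : 2 * M / ε + 1 ≤ T := le_trans (le_max_right _ _) hT
  have hint1 : IntervalIntegrable f volume a t₁ :=
    (hf.mono (by rw [Set.uIcc_of_le hat₁]; exact Set.Icc_subset_Ici_self)).intervalIntegrable
  have hint2 : IntervalIntegrable f volume t₁ T :=
    (hf.mono (by
      rw [Set.uIcc_of_le hTt₁]
      exact fun x hx => le_trans hat₁ hx.1)).intervalIntegrable
  have hsplit : ∫ t in a..T, f t = M + ∫ t in t₁..T, f t :=
    (intervalIntegral.integral_add_adjacent_intervals hint1 hint2).symm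
  have htail : ∫ t in t₁..T, f t ≤ (T - t₁) * (ε / 2) := by
    have hmono := intervalIntegral.integral_mono_on hTt₁ hint2 intervalIntegrable_const
      (fun x hx => by
        have hd := ht₁' x (le_trans (le_max_left _ _) hx.1)
        rw [Real.dist_eq, sub_zero, abs_of_nonneg (h0 x (hat₁.trans hx.1))] at hd
        exact hd.le)
    simpa [mul_div_assoc] using hmono
  have hI0 : 0 ≤ ∫ t in a..T, f t := intervalIntegral.integral_nonneg hTa (fun x hx => h0 x hx.1)
  rw [Real.dist_eq, sub_zero, abs_of_nonneg (mul_nonneg (by positivity) hI0)]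
  have hεT : 2 * M + ε ≤ ε * T := by
    calc 2 * M + ε = (2 * M / ε + 1) * ε := by field_simp
      _ ≤ T * ε := mul_le_mul_of_nonneg_right hTM hε.le
      _ = ε * T := mul_comm _ _
  have hkey : ∫ t in a..T, f t < ε * T := by
    rw [hsplit]
    have ht₁0 : 0 ≤ t₁ := ha.trans hat₁
    nlinarith [htail, mul_nonneg ht₁0 (le_of_lt (half_pos hε))]
  calc (1 / T) * ∫ t in a..T, f t < (1 / T) * (ε * T) :=
        mul_lt_mul_of_pos_left hkey (by positivity)
    _ = ε := by field_simp

set_option maxHeartbeats 1000000 in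
/-- If `A⁰` is exponentially stable and the bounded continuous time-varying
matrix `A(t)` converges to `A⁰` as `t → ∞`, and `Φ` is the fundamental matrix
of `ẋ = A(t) x`, then for any `t₀ ≥ 0`,
`(1/T) ∫_{t₀}^T ‖Φ(t,t₀) − exp((t−t₀)A⁰)‖² dt → 0` as `T → ∞`. -/
theorem stmt_1 {n : ℕ}
    (A0 : EuclideanSpace ℝ (Fin n) →L[ℝ] EuclideanSpace ℝ (Fin n))
    (β0 ρ0 : ℝ) (hβ0 : 0 < β0) (hρ0 : 0 < ρ0)
    (hstab : ∀ t : ℝ, 0 ≤ t → ‖NormedSpace.exp (t • A0)‖ ≤ β0 * Real.exp (-ρ0 * t))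
    (A : ℝ → (EuclideanSpace ℝ (Fin n) →L[ℝ] EuclideanSpace ℝ (Fin n)))
    (hAcont : ContinuousOn A (Set.Ici (0 : ℝ)))
    (hAbdd : ∃ C : ℝ, ∀ t : ℝ, 0 ≤ t → ‖A t‖ ≤ C)
    (hAconv : Tendsto A atTop (nhds A0))
    (Φ : ℝ → ℝ → (EuclideanSpace ℝ (Fin n) →L[ℝ] EuclideanSpace ℝ (Fin n)))
    (hΦinit : ∀ s : ℝ, 0 ≤ s → Φ s s = 1)
    (hΦderiv : ∀ s : ℝ, 0 ≤ s → ∀ t : ℝ, s ≤ t →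
      HasDerivAt (fun τ => Φ τ s) ((A t).comp (Φ t s)) t)
    (t₀ : ℝ) (ht₀ : 0 ≤ t₀) :
    Tendsto (fun T : ℝ =>
        (1 / T) * ∫ t in t₀..T, ‖Φ t t₀ - NormedSpace.exp ((t - t₀) • A0)‖ ^ 2)
      atTop (nhds 0) := by
  -- continuity of the flow in time
  have hψc : ContinuousOn (fun t => Φ t t₀) (Set.Ici t₀) :=
    fun t ht => ((hΦderiv t₀ ht₀ t ht).continuousAt).continuousWithinAt
  -- globally continuous extensions
  set Ψ : ℝ → (EuclideanSpace ℝ (Fin n) →L[ℝ] EuclideanSpace ℝ (Fin n)) :=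
    fun t => Φ (max t t₀) t₀ with hΨdef
  have hΨc : Continuous Ψ :=
    hψc.comp_continuous (continuous_id.max continuous_const) (fun x => Set.mem_Ici.mpr (le_max_right _ _))
  set ee : ℝ → ℝ := fun τ => ‖A (max τ 0) - A0‖ with heedef
  have hAe : Continuous (fun τ : ℝ => A (max τ 0)) :=
    hAcont.comp_continuous (continuous_id.max continuous_const) (fun x => Set.mem_Ici.mpr (le_max_right _ _))
  have heec : Continuous ee := (hAe.sub continuous_const).norm
  set uu : ℝ → ℝ := fun t => Real.exp (ρ0 * (t - t₀)) * ‖Ψ t‖ with huudef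
  have huuc : Continuous uu :=
    (Real.continuous_exp.comp (continuous_const.mul (continuous_id.sub continuous_const))).mul
      hΨc.norm
  have hexc : ∀ t : ℝ, Continuous (fun τ : ℝ => NormedSpace.exp ((t - τ) • A0)) := fun t =>
    (continuous_iff_continuousAt.mpr fun x => (NormedSpace.exp_analytic (𝕂 := ℝ) x).continuousAt).comp
      ((continuous_const.sub continuous_id).smul continuous_const)
  -- variation of constants
  have hVOC : ∀ t, t₀ ≤ t →
      Φ t t₀ - NormedSpace.exp ((t - t₀) • A0) =
        ∫ τ in t₀..t, NormedSpace.exp ((t - τ) • A0) * ((A τ - A0) * Φ τ t₀) := by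
    intro t ht
    have hderiv : ∀ τ ∈ Set.uIcc t₀ t,
        HasDerivAt (fun τ => NormedSpace.exp ((t - τ) • A0) * Φ τ t₀)
          (NormedSpace.exp ((t - τ) • A0) * ((A τ - A0) * Φ τ t₀)) τ := by
      intro τ hτ
      rw [Set.uIcc_of_le ht] at hτ
      have hlin : HasDerivAt (fun τ : ℝ => t - τ) (-1) τ := (hasDerivAt_id τ).const_sub t
      have h1' := HasDerivAt.scomp_of_eq τ (hasDerivAt_exp_smul_const (𝕂 := ℝ) A0 (t - τ)) hlin rfl
      have h1 : HasDerivAt (fun τ : ℝ => NormedSpace.exp ((t - τ) • A0))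
          (-(NormedSpace.exp ((t - τ) • A0) * A0)) τ := by
        simpa [Function.comp_def] using h1'
      have h2 : HasDerivAt (fun τ => Φ τ t₀) (A τ * Φ τ t₀) τ := hΦderiv t₀ ht₀ τ hτ.1
      have h3 := h1.mul h2
      have heqd : NormedSpace.exp ((t - τ) • A0) * ((A τ - A0) * Φ τ t₀)
          = (-(NormedSpace.exp ((t - τ) • A0) * A0)) * Φ τ t₀ +
            NormedSpace.exp ((t - τ) • A0) * (A τ * Φ τ t₀) := by
        noncomm_ring
        simp only [smul_mul_assoc, mul_smul_comm, mul_assoc]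
        simp only [neg_smul, one_smul]
        congr 1
        exact mul_neg (NormedSpace.exp ((t + -τ) • A0)) (A0 * Φ τ t₀)
      rw [heqd]
      exact h3
    have hint : IntervalIntegrable
        (fun τ => NormedSpace.exp ((t - τ) • A0) * ((A τ - A0) * Φ τ t₀)) volume t₀ t := by
      apply ContinuousOn.intervalIntegrable
      refine ((hexc t).continuousOn).mul (ContinuousOn.mul ?_ ?_)
      · exact (hAcont.mono (by
          rw [Set.uIcc_of_le ht]; exact fun x hx => le_trans ht₀ hx.1)).sub continuousOn_const
      · exact hψc.mono (by rw [Set.uIcc_of_le ht]; exact fun x hx => hx.1)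
    have heq := intervalIntegral.integral_eq_sub_of_hasDerivAt hderiv hint
    rw [heq, hΦinit t₀ ht₀, mul_one, sub_self, zero_smul ℝ A0, NormedSpace.exp_zero, one_mul]
  -- the key integral inequality
  have hkey : ∀ t, t₀ ≤ t → uu t ≤ β0 + β0 * ∫ τ in t₀..t, ee τ * uu τ := by
    intro t ht
    have h1 : ‖Φ t t₀ - NormedSpace.exp ((t - t₀) • A0)‖ ≤
        ∫ τ in t₀..t, β0 * Real.exp (-ρ0 * (t - τ)) * (ee τ * ‖Φ τ t₀‖) := by
      rw [hVOC t ht]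
      refine (intervalIntegral.norm_integral_le_integral_norm ht).trans ?_
      refine intervalIntegral.integral_mono_on ht ?_ ?_ ?_
      · apply ContinuousOn.intervalIntegrable
        refine ContinuousOn.norm (((hexc t).continuousOn).mul (ContinuousOn.mul ?_ ?_))
        · exact (hAcont.mono (by
            rw [Set.uIcc_of_le ht]; exact fun x hx => le_trans ht₀ hx.1)).sub continuousOn_const
        · exact hψc.mono (by rw [Set.uIcc_of_le ht]; exact fun x hx => hx.1)
      · apply ContinuousOn.intervalIntegrable
        refine ContinuousOn.mul (Continuous.continuousOn (continuous_const.mul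
          (Real.continuous_exp.comp (continuous_const.mul
            (continuous_const.sub continuous_id))))) ?_
        refine ContinuousOn.mul heec.continuousOn ?_
        exact (hψc.mono (by rw [Set.uIcc_of_le ht]; exact fun x hx => hx.1)).norm
      · intro τ hτ
        have h2 : (0:ℝ) ≤ t - τ := sub_nonneg.mpr hτ.2
        have hmax : max τ 0 = τ := max_eq_left (le_trans ht₀ hτ.1)
        calc ‖NormedSpace.exp ((t - τ) • A0) * ((A τ - A0) * Φ τ t₀)‖
            ≤ ‖NormedSpace.exp ((t - τ) • A0)‖ * ‖(A τ - A0) * Φ τ t₀‖ := norm_mul_le _ _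
          _ ≤ ‖NormedSpace.exp ((t - τ) • A0)‖ * (‖A τ - A0‖ * ‖Φ τ t₀‖) := by
              exact mul_le_mul_of_nonneg_left (norm_mul_le _ _) (norm_nonneg _)
          _ ≤ β0 * Real.exp (-ρ0 * (t - τ)) * (ee τ * ‖Φ τ t₀‖) := by
              rw [heedef]; simp only [hmax]
              exact mul_le_mul_of_nonneg_right (hstab _ h2)
                (mul_nonneg (norm_nonneg _) (norm_nonneg _))
    have hs := hstab (t - t₀) (sub_nonneg.mpr ht)
    have h3 : ‖Φ t t₀‖ ≤ β0 * Real.exp (-ρ0 * (t - t₀)) +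
        ∫ τ in t₀..t, β0 * Real.exp (-ρ0 * (t - τ)) * (ee τ * ‖Φ τ t₀‖) := by
      have hns := norm_sub_norm_le (Φ t t₀) (NormedSpace.exp ((t - t₀) • A0))
      linarith
    have h4 : Real.exp (ρ0 * (t - t₀)) *
          ∫ τ in t₀..t, β0 * Real.exp (-ρ0 * (t - τ)) * (ee τ * ‖Φ τ t₀‖)
        = β0 * ∫ τ in t₀..t, ee τ * uu τ := by
      rw [← intervalIntegral.integral_const_mul, ← intervalIntegral.integral_const_mul]
      apply intervalIntegral.integral_congr
      intro τ hτ
      rw [Set.uIcc_of_le ht] at hτ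
      have hmaxτ : max τ t₀ = τ := max_eq_left hτ.1
      show Real.exp (ρ0 * (t - t₀)) * (β0 * Real.exp (-ρ0 * (t - τ)) * (ee τ * ‖Φ τ t₀‖))
          = β0 * (ee τ * uu τ)
      rw [huudef]
      simp only [hΨdef, hmaxτ]
      rw [show Real.exp (ρ0 * (t - t₀)) * (β0 * Real.exp (-ρ0 * (t - τ)) * (ee τ * ‖Φ τ t₀‖))
          = (Real.exp (ρ0 * (t - t₀)) * Real.exp (-ρ0 * (t - τ))) * (β0 * (ee τ * ‖Φ τ t₀‖))
          from by ring, ← Real.exp_add,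
        show ρ0 * (t - t₀) + -ρ0 * (t - τ) = ρ0 * (τ - t₀) from by ring]
      ring
    have hΨt : Ψ t = Φ t t₀ := by simp only [hΨdef, max_eq_left ht]
    have hP : (0:ℝ) < Real.exp (ρ0 * (t - t₀)) := Real.exp_pos _
    have h5 : uu t ≤ Real.exp (ρ0 * (t - t₀)) * (β0 * Real.exp (-ρ0 * (t - t₀))) +
        β0 * ∫ τ in t₀..t, ee τ * uu τ := by
      rw [← h4, ← mul_add]
      rw [huudef]
      simp only [hΨt]
      exact mul_le_mul_of_nonneg_left h3 hP.le
    have h6 : Real.exp (ρ0 * (t - t₀)) * (β0 * Real.exp (-ρ0 * (t - t₀))) = β0 := by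
      rw [mul_comm, mul_assoc, ← Real.exp_add,
        show -ρ0 * (t - t₀) + ρ0 * (t - t₀) = 0 from by ring, Real.exp_zero, mul_one]
    rw [h6] at h5
    exact h5
  -- Gronwall
  have hgron : ∀ t, t₀ ≤ t → uu t ≤ β0 * Real.exp (β0 * ∫ τ in t₀..t, ee τ) :=
    gronwall_int_s1 huuc heec (fun t _ => norm_nonneg _) hβ0.le hβ0.le hkey
  -- ee tends to 0
  have heelim : Tendsto ee atTop (nhds 0) := by
    have h1 : Tendsto (fun τ : ℝ => max τ 0) atTop atTop :=
      tendsto_atTop_mono (fun τ => le_max_left _ _) tendsto_id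
    have h2 : Tendsto (fun τ : ℝ => A (max τ 0) - A0) atTop (nhds (A0 - A0)) :=
      (hAconv.comp h1).sub tendsto_const_nhds
    rw [sub_self] at h2
    have h3 := h2.norm
    rw [norm_zero] at h3
    exact h3
  obtain ⟨t₁', ht₁'⟩ := eventually_atTop.mp
    (heelim.eventually_le_const (show (0:ℝ) < ρ0 / (2 * β0) by positivity))
  set t₁ := max t₁' t₀ with ht₁def
  have ht₀t₁ : t₀ ≤ t₁ := le_max_right _ _
  set M := ∫ τ in t₀..t₁, ee τ with hMdef
  -- exponential decay of Φ
  have hdecay : ∀ t, t₁ ≤ t → ‖Φ t t₀‖ ≤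
      (β0 * Real.exp (β0 * M - ρ0 / 2 * t₁ + ρ0 * t₀)) * Real.exp (-(ρ0 / 2) * t) := by
    intro t ht
    have htt₀ : t₀ ≤ t := ht₀t₁.trans ht
    have hsplit : ∫ τ in t₀..t, ee τ = M + ∫ τ in t₁..t, ee τ :=
      (intervalIntegral.integral_add_adjacent_intervals
        (heec.intervalIntegrable (μ := volume) _ _) (heec.intervalIntegrable (μ := volume) _ _)).symm
    have htail : ∫ τ in t₁..t, ee τ ≤ (t - t₁) * (ρ0 / (2 * β0)) := by
      have hmono := intervalIntegral.integral_mono_on ht (heec.intervalIntegrable (μ := volume) _ _)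
        intervalIntegrable_const (fun x hx => ht₁' x ((le_max_left _ _).trans hx.1))
      simpa [mul_div_assoc] using hmono
    have hE : ∫ τ in t₀..t, ee τ ≤ M + (t - t₁) * (ρ0 / (2 * β0)) := by
      rw [hsplit]; linarith
    have huu' : uu t ≤ β0 * Real.exp (β0 * (M + (t - t₁) * (ρ0 / (2 * β0)))) :=
      (hgron t htt₀).trans (by
        apply mul_le_mul_of_nonneg_left _ hβ0.le
        exact Real.exp_le_exp.mpr (mul_le_mul_of_nonneg_left hE hβ0.le))
    have hΨt : Ψ t = Φ t t₀ := by simp only [hΨdef, max_eq_left htt₀]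
    have hval : ‖Φ t t₀‖ = uu t * Real.exp (-(ρ0 * (t - t₀))) := by
      rw [huudef]
      simp only [hΨt]
      rw [mul_comm (Real.exp _) ‖Φ t t₀‖, mul_assoc, ← Real.exp_add,
        show ρ0 * (t - t₀) + -(ρ0 * (t - t₀)) = 0 from by ring, Real.exp_zero, mul_one]
    rw [hval]
    calc uu t * Real.exp (-(ρ0 * (t - t₀)))
        ≤ β0 * Real.exp (β0 * (M + (t - t₁) * (ρ0 / (2 * β0)))) * Real.exp (-(ρ0 * (t - t₀))) :=
          mul_le_mul_of_nonneg_right huu' (Real.exp_pos _).le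
      _ = (β0 * Real.exp (β0 * M - ρ0 / 2 * t₁ + ρ0 * t₀)) * Real.exp (-(ρ0 / 2) * t) := by
          rw [mul_assoc, ← Real.exp_add, mul_assoc, ← Real.exp_add]
          congr 1
          field_simp
          ring
  -- Φ tends to 0
  have hΦlim : Tendsto (fun t => ‖Φ t t₀‖) atTop (nhds 0) := by
    apply squeeze_zero' (Eventually.of_forall fun t => norm_nonneg _)
      (eventually_atTop.mpr ⟨t₁, hdecay⟩)
    have h2 : Tendsto (fun t : ℝ => (ρ0 / 2) * t) atTop atTop :=
      Tendsto.const_mul_atTop (by positivity) tendsto_id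
    have h3 := Real.tendsto_exp_neg_atTop_nhds_zero.comp h2
    have h4 : Tendsto (fun t : ℝ => Real.exp (-(ρ0 / 2) * t)) atTop (nhds 0) :=
      Tendsto.congr (fun t => by
        show Real.exp (-(ρ0 / 2 * t)) = Real.exp (-(ρ0 / 2) * t); rw [neg_mul]) h3
    have h5 := h4.const_mul (β0 * Real.exp (β0 * M - ρ0 / 2 * t₁ + ρ0 * t₀))
    rw [mul_zero] at h5
    exact h5
  -- exp tends to 0
  have hexlim : Tendsto (fun t => ‖NormedSpace.exp ((t - t₀) • A0)‖) atTop (nhds 0) := by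
    apply squeeze_zero' (Eventually.of_forall fun t => norm_nonneg _)
      (eventually_atTop.mpr ⟨t₀, fun t ht => hstab (t - t₀) (sub_nonneg.mpr ht)⟩)
    have h2 : Tendsto (fun t : ℝ => ρ0 * (t - t₀)) atTop atTop := by
      apply Tendsto.const_mul_atTop hρ0
      exact tendsto_atTop_add_const_right _ _ tendsto_id
    have h3 := Real.tendsto_exp_neg_atTop_nhds_zero.comp h2
    have h4 : Tendsto (fun t : ℝ => Real.exp (-ρ0 * (t - t₀))) atTop (nhds 0) :=
      Tendsto.congr (fun t => by
        show Real.exp (-(ρ0 * (t - t₀))) = Real.exp (-ρ0 * (t - t₀)); rw [neg_mul]) h3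
    have h5 := h4.const_mul β0
    rw [mul_zero] at h5
    exact h5
  -- the squared difference tends to 0
  have hflim : Tendsto
      (fun t => ‖Φ t t₀ - NormedSpace.exp ((t - t₀) • A0)‖ ^ 2) atTop (nhds 0) := by
    have h1 : Tendsto (fun t => ‖Φ t t₀ - NormedSpace.exp ((t - t₀) • A0)‖) atTop (nhds 0) := by
      apply squeeze_zero' (Eventually.of_forall fun t => norm_nonneg _)
        (Eventually.of_forall fun t => norm_sub_le _ _)
      have h6 := hΦlim.add hexlim
      rw [add_zero] at h6
      exact h6
    have h7 := h1.pow 2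
    rw [show (0:ℝ) ^ 2 = 0 from by norm_num] at h7
    exact h7
  -- Cesàro
  have hexc' : Continuous (fun t : ℝ => NormedSpace.exp ((t - t₀) • A0)) :=
    (continuous_iff_continuousAt.mpr fun x => (NormedSpace.exp_analytic (𝕂 := ℝ) x).continuousAt).comp
      ((continuous_id.sub continuous_const).smul continuous_const)
  exact cesaro_int ht₀ (((hψc.sub hexc'.continuousOn).norm).pow 2)
    (fun t _ => pow_nonneg (norm_nonneg _) 2) hflim
end

section
/- Let f be a parametrized family of densities on Θ with parameter sets P ⊆ P̃ (as in the context), satisfying the identifiability condition: for all ζ, ζ', ζ⁰ ∈ P, ∫_Θ log f(ζ,θ) f(ζ⁰,θ) dθ = ∫_Θ log f(ζ',θ) f(ζ⁰,θ) dθ if and only if ζ = ζ'. Fix ζ⁰ ∈ P and let (θ_j)_{j≥1} be independent identically distributed Θ-valued random variables with common density f(ζ⁰,·) with respect to Lebesgue measure on Θ. For each N, let ζ̂_N be any maximum likelihood estimate, i.e., any P-valued random variable minimizing the scaled negative log-likelihood ζ ↦ −(1/N) Σ_{j=1}^{N} log f(ζ,θ_j) over ζ ∈ P. Then ζ̂_N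 → ζ⁰ almost surely as N → ∞ (strong consistency of the MLE). -/
open MeasureTheory Filter

-- auxiliary: Lipschitz bound for log on [δ, ∞)
lemma log_lip_aux {δ a b : ℝ} (hδ : 0 < δ) (ha : δ ≤ a) (hb : δ ≤ b) (hab : b ≤ a) :
    Real.log a - Real.log b ≤ (a - b) / δ := by
  have hb0 : 0 < b := lt_of_lt_of_le hδ hb
  have ha0 : 0 < a := lt_of_lt_of_le hδ ha
  have h1 : Real.log a - Real.log b = Real.log (a / b) := (Real.log_div ha0.ne' hb0.ne').symm
  have h2 : Real.log (a / b) ≤ a / b - 1 := Real.log_le_sub_one_of_pos (by positivity)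
  have h3 : a / b - 1 = (a - b) / b := by field_simp
  have h4 : (a - b) / b ≤ (a - b) / δ :=
    div_le_div_of_nonneg_left (by linarith) hδ hb
  linarith [h1 ▸ h2, h3 ▸ h2]

lemma log_lip {δ a b : ℝ} (hδ : 0 < δ) (ha : δ ≤ a) (hb : δ ≤ b) :
    |Real.log a - Real.log b| ≤ |a - b| / δ := by
  rcases le_total b a with h | h
  · rw [abs_of_nonneg (by linarith : (0:ℝ) ≤ a - b),
      abs_of_nonneg (by nlinarith [Real.log_le_log (lt_of_lt_of_le hδ hb) h] :
        (0:ℝ) ≤ Real.log a - Real.log b)]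
    exact log_lip_aux hδ ha hb h
  · rw [abs_sub_comm, abs_sub_comm a b,
      abs_of_nonneg (by linarith : (0:ℝ) ≤ b - a),
      abs_of_nonneg (by nlinarith [Real.log_le_log (lt_of_lt_of_le hδ ha) h] :
        (0:ℝ) ≤ Real.log b - Real.log a)]
    exact log_lip_aux hδ hb ha h

/-- Strong consistency of the maximum likelihood estimator: for an i.i.d. sample
`θ_j` with density `f(ζ⁰,·)` on `Θ`, under the identifiability condition, any
sequence `ζ̂_N` of minimizers over `P` of the scaled negative log-likelihood
`ζ ↦ −(1/N) Σ_{j<N} log f(ζ,θ_j)` converges to `ζ⁰` almost surely. -/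
theorem stmt_9 {d p : ℕ}
    (Θ : Set (EuclideanSpace ℝ (Fin d)))
    (P Pt : Set (EuclideanSpace ℝ (Fin p)))
    (hΘ : IsCompact Θ) (hP : IsCompact P) (hPt : IsOpen Pt) (hPPt : P ⊆ Pt)
    (f : EuclideanSpace ℝ (Fin p) → EuclideanSpace ℝ (Fin d) → ℝ)
    (δ M K : ℝ) (hδ : 0 < δ) (hδM : δ ≤ M)
    (hfcont : ContinuousOn (fun q : EuclideanSpace ℝ (Fin p) × EuclideanSpace ℝ (Fin d) =>
        f q.1 q.2) (Pt ×ˢ Θ))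
    (hflb : ∀ ζ ∈ Pt, ∀ θ ∈ Θ, δ ≤ f ζ θ)
    (hfub : ∀ ζ ∈ Pt, ∀ θ ∈ Θ, f ζ θ ≤ M)
    (hfdens : ∀ ζ ∈ Pt, (∫ θ in Θ, f ζ θ) = 1)
    (Df : EuclideanSpace ℝ (Fin p) → EuclideanSpace ℝ (Fin d) →
      (EuclideanSpace ℝ (Fin p) →L[ℝ] ℝ))
    (hfderiv : ∀ ζ ∈ Pt, ∀ θ ∈ Θ, HasFDerivAt (fun z => f z θ) (Df ζ θ) ζ)
    (hfgrad : ∀ ζ ∈ Pt, ∀ θ ∈ Θ, ‖Df ζ θ‖ ≤ K)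
    (hident : ∀ ζ ∈ P, ∀ ζ' ∈ P, ∀ ζ'' ∈ P,
      ((∫ θ in Θ, Real.log (f ζ θ) * f ζ'' θ) =
        (∫ θ in Θ, Real.log (f ζ' θ) * f ζ'' θ)) ↔ ζ = ζ')
    (ζ0 : EuclideanSpace ℝ (Fin p)) (hζ0 : ζ0 ∈ P)
    {Ω : Type*} [MeasurableSpace Ω] (μ : Measure Ω) [IsProbabilityMeasure μ]
    (θseq : ℕ → Ω → EuclideanSpace ℝ (Fin d))
    (hmeas : ∀ j, Measurable (θseq j))
    (hindep : ProbabilityTheory.iIndepFun θseq μ)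
    (hdist : ∀ j, Measure.map (θseq j) μ =
      (volume.restrict Θ).withDensity (fun θ => ENNReal.ofReal (f ζ0 θ)))
    (ζhat : ℕ → Ω → EuclideanSpace ℝ (Fin p))
    (hζhat : ∀ N ω, ζhat N ω ∈ P ∧ ∀ ζ ∈ P,
      (-(1 / (N : ℝ)) * ∑ j ∈ Finset.range N, Real.log (f (ζhat N ω) (θseq j ω))) ≤
        (-(1 / (N : ℝ)) * ∑ j ∈ Finset.range N, Real.log (f ζ (θseq j ω)))) :
    ∀ᵐ ω ∂μ, Tendsto (fun N => ζhat N ω) atTop (nhds ζ0) := by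
  classical
  have hζ0t : ζ0 ∈ Pt := hPPt hζ0
  have ΘM : MeasurableSet Θ := hΘ.isClosed.measurableSet
  -- Θ is nonempty
  have hΘne : Θ.Nonempty := by
    rcases Set.eq_empty_or_nonempty Θ with h | h
    · exfalso
      have := hfdens ζ0 hζ0t
      rw [h] at this
      simp at this
    · exact h
  have hK0 : 0 ≤ K := le_trans (norm_nonneg _) (hfgrad ζ0 hζ0t hΘne.choose hΘne.choose_spec)
  -- continuity in θ
  have hfc : ∀ ζ ∈ Pt, ContinuousOn (fun θ => f ζ θ) Θ := by
    intro ζ hζ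
    exact hfcont.comp ((Continuous.prodMk_right ζ).continuousOn) (fun θ hθ => ⟨hζ, hθ⟩)
  have hlogc : ∀ ζ ∈ Pt, ContinuousOn (fun θ => Real.log (f ζ θ)) Θ := by
    intro ζ hζ
    exact (hfc ζ hζ).log (fun θ hθ => (lt_of_lt_of_le hδ (hflb ζ hζ θ hθ)).ne')
  -- the truncated log-likelihood
  set L : EuclideanSpace ℝ (Fin p) → EuclideanSpace ℝ (Fin d) → ℝ :=
    fun ζ => Θ.indicator fun θ => Real.log (f ζ θ) with hLdef
  have Lmeas : ∀ ζ ∈ Pt, Measurable (L ζ) := by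
    intro ζ hζ
    have := (hlogc ζ hζ).measurable_piecewise
      (continuousOn_const (c := (0:ℝ))) ΘM
    rw [show (fun _ : EuclideanSpace ℝ (Fin d) => (0:ℝ)) = 0 from rfl,
      Set.piecewise_eq_indicator] at this
    rw [hLdef]; exact this
  set C : ℝ := max |Real.log δ| |Real.log M| with hCdef
  have hC0 : (0 : ℝ) ≤ C := le_trans (abs_nonneg _) (le_max_left _ _)
  have logbound : ∀ ζ ∈ Pt, ∀ θ ∈ Θ, |Real.log (f ζ θ)| ≤ C := by
    intro ζ hζ θ hθ
    have h1 : Real.log δ ≤ Real.log (f ζ θ) := Real.log_le_log hδ (hflb ζ hζ θ hθ)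
    have h2 : Real.log (f ζ θ) ≤ Real.log M :=
      Real.log_le_log (lt_of_lt_of_le hδ (hflb ζ hζ θ hθ)) (hfub ζ hζ θ hθ)
    rcases abs_cases (Real.log (f ζ θ)) with ⟨he, _⟩ | ⟨he, _⟩
    · rw [he]; exact le_trans (le_trans h2 (le_abs_self _)) (le_max_right _ _)
    · rw [he]; exact le_trans (le_trans (neg_le_neg h1) (neg_le_abs _)) (le_max_left _ _)
  have Lbound : ∀ ζ ∈ Pt, ∀ θ, |L ζ θ| ≤ C := by
    intro ζ hζ θ
    by_cases hθ : θ ∈ Θ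
    · simp only [hLdef, Set.indicator_of_mem hθ]; exact logbound ζ hζ θ hθ
    · simp only [hLdef, Set.indicator_of_notMem hθ]; simpa using hC0
  set g : EuclideanSpace ℝ (Fin p) → ℝ :=
    fun ζ => ∫ θ in Θ, Real.log (f ζ θ) * f ζ0 θ with hgdef
  -- integrability
  have intf : ∀ ζ ∈ Pt, IntegrableOn (fun θ => f ζ θ) Θ := by
    intro ζ hζ
    exact (hfc ζ hζ).integrableOn_compact hΘ
  have intLf : ∀ ζ ∈ Pt, IntegrableOn (fun θ => Real.log (f ζ θ) * f ζ0 θ) Θ := by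
    intro ζ hζ
    exact ((hlogc ζ hζ).mul (hfc ζ0 hζ0t)).integrableOn_compact hΘ
  -- almost surely samples are in Θ
  set ν := (volume.restrict Θ).withDensity (fun θ => ENNReal.ofReal (f ζ0 θ)) with hνdef
  have νcompl : ν Θᶜ = 0 := by
    rw [hνdef, withDensity_apply _ ΘM.compl, Measure.restrict_restrict ΘM.compl]
    simp [Set.compl_inter_self]
  have hA : ∀ᵐ ω ∂μ, ∀ j, θseq j ω ∈ Θ := by
    rw [ae_all_iff]
    intro j
    have : μ (θseq j ⁻¹' Θᶜ) = 0 := by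
      rw [← Measure.map_apply (hmeas j) ΘM.compl, hdist j, νcompl]
    filter_upwards [measure_eq_zero_iff_ae_notMem.1 this] with ω hω
    simpa using hω
  -- mean value computation
  have hgL : ∀ ζ ∈ Pt, (∫ θ, L ζ θ ∂ν) = g ζ := by
    intro ζ hζ
    have wmeas : Measurable (Θ.indicator (f ζ0)) := by
      have := (hfc ζ0 hζ0t).measurable_piecewise (continuousOn_const (c := (0:ℝ))) ΘM
      rw [show (fun _ : EuclideanSpace ℝ (Fin d) => (0:ℝ)) = 0 from rfl,
        Set.piecewise_eq_indicator] at this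
      exact this
    have hcongr : (fun θ => ENNReal.ofReal (f ζ0 θ)) =ᵐ[volume.restrict Θ]
        (fun θ => ((Real.toNNReal (Θ.indicator (f ζ0) θ) : NNReal) : ENNReal)) := by
      filter_upwards [ae_restrict_mem ΘM] with θ hθ
      rw [Set.indicator_of_mem hθ]
      rfl
    have hν2 : ν = (volume.restrict Θ).withDensity
        (fun θ => ((Real.toNNReal (Θ.indicator (f ζ0) θ) : NNReal) : ENNReal)) := by
      rw [hνdef]; exact withDensity_congr_ae hcongr
    rw [hν2, integral_withDensity_eq_integral_smul wmeas.real_toNNReal (L ζ), hgdef]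
    apply setIntegral_congr_ae ΘM
    filter_upwards with θ hθ
    have h0 : (0:ℝ) ≤ f ζ0 θ := le_trans hδ.le (hflb ζ0 hζ0t θ hθ)
    simp [hLdef, Set.indicator_of_mem hθ, NNReal.smul_def, Real.coe_toNNReal _ h0,
      mul_comm]
  -- strong law for fixed ζ
  have slln : ∀ ζ ∈ Pt, ∀ᵐ ω ∂μ,
      Tendsto (fun N : ℕ => (N : ℝ)⁻¹ * ∑ j ∈ Finset.range N, L ζ (θseq j ω))
        atTop (nhds (g ζ)) := by
    intro ζ hζ
    have Lm := Lmeas ζ hζ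
    set X : ℕ → Ω → ℝ := fun j ω => L ζ (θseq j ω) with hX
    have hXmeas : ∀ j, Measurable (X j) := fun j => Lm.comp (hmeas j)
    have hint : Integrable (X 0) μ := by
      refine (integrable_const C).mono' (hXmeas 0).aestronglyMeasurable ?_
      filter_upwards with ω
      simpa [hX, Real.norm_eq_abs] using Lbound ζ hζ (θseq 0 ω)
    have hpair : Pairwise (Function.onFun (ProbabilityTheory.IndepFun · · μ) X) := by
      intro i j hij
      exact (hindep.indepFun hij).comp Lm Lm
    have hid : ∀ j, ProbabilityTheory.IdentDistrib (X j) (X 0) μ μ := by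
      intro j
      have h0 : ProbabilityTheory.IdentDistrib (θseq j) (θseq 0) μ μ :=
        ⟨(hmeas j).aemeasurable, (hmeas 0).aemeasurable, by rw [hdist j, hdist 0]⟩
      exact h0.comp Lm
    have hSL := ProbabilityTheory.strong_law_ae X hint hpair hid
    have hmean : (∫ ω, X 0 ω ∂μ) = g ζ := by
      have h1 : (∫ ω, X 0 ω ∂μ) = ∫ x, L ζ x ∂(Measure.map (θseq 0) μ) :=
        (integral_map (hmeas 0).aemeasurable Lm.aestronglyMeasurable).symm
      rw [h1, hdist 0]
      exact hgL ζ hζ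
    filter_upwards [hSL] with ω hω
    have : (∫ ω, X 0 ω ∂μ) = g ζ := hmean
    rw [this] at hω
    simpa [hX, smul_eq_mul] using hω
  -- radius around P inside Pt
  obtain ⟨ρ, hρ0, hρsub⟩ : ∃ ρ > (0:ℝ), ∀ ζ ∈ P, Metric.ball ζ ρ ⊆ Pt := by
    obtain ⟨ρ, hρ0, hsub⟩ := hP.exists_thickening_subset_open hPt hPPt
    exact ⟨ρ, hρ0, fun ζ hζ x hx =>
      hsub (Metric.mem_thickening_iff.2 ⟨ζ, hζ, Metric.mem_ball.1 hx⟩)⟩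
  -- Lipschitz estimates on log-likelihood
  have lip : ∀ ζ1 ∈ P, ∀ ζ2 ∈ Metric.ball ζ1 ρ, ∀ θ ∈ Θ,
      |Real.log (f ζ2 θ) - Real.log (f ζ1 θ)| ≤ K / δ * dist ζ2 ζ1 := by
    intro ζ1 h1 ζ2 h2 θ hθ
    have hball : Metric.ball ζ1 ρ ⊆ Pt := hρsub ζ1 h1
    have hconv : Convex ℝ (Metric.ball ζ1 ρ) := convex_ball ζ1 ρ
    have hder : ∀ x ∈ Metric.ball ζ1 ρ,
        HasFDerivWithinAt (fun z => f z θ) (Df x θ) (Metric.ball ζ1 ρ) x :=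
      fun x hx => (hfderiv x (hball hx) θ hθ).hasFDerivWithinAt
    have hbd : ∀ x ∈ Metric.ball ζ1 ρ, ‖Df x θ‖ ≤ K := fun x hx => hfgrad x (hball hx) θ hθ
    have hmv := hconv.norm_image_sub_le_of_norm_hasFDerivWithin_le hder hbd
      (Metric.mem_ball_self hρ0) h2
    have hmv' : |f ζ2 θ - f ζ1 θ| ≤ K * dist ζ2 ζ1 := by
      rw [dist_eq_norm]
      simpa [Real.norm_eq_abs] using hmv
    have h12 : δ ≤ f ζ1 θ := hflb ζ1 (hPPt h1) θ hθ
    have h22 : δ ≤ f ζ2 θ := hflb ζ2 (hball h2) θ hθ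
    calc |Real.log (f ζ2 θ) - Real.log (f ζ1 θ)| ≤ |f ζ2 θ - f ζ1 θ| / δ :=
          log_lip hδ h22 h12
      _ ≤ (K * dist ζ2 ζ1) / δ := by gcongr
      _ = K / δ * dist ζ2 ζ1 := by ring
  have glip : ∀ ζ1 ∈ P, ∀ ζ2 ∈ Metric.ball ζ1 ρ, |g ζ2 - g ζ1| ≤ K / δ * dist ζ2 ζ1 := by
    intro ζ1 h1 ζ2 h2
    have hball : Metric.ball ζ1 ρ ⊆ Pt := hρsub ζ1 h1
    have h2t : ζ2 ∈ Pt := hball h2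
    have h1t : ζ1 ∈ Pt := hPPt h1
    have hsub : g ζ2 - g ζ1 =
        ∫ θ in Θ, (Real.log (f ζ2 θ) * f ζ0 θ - Real.log (f ζ1 θ) * f ζ0 θ) := by
      rw [hgdef]
      exact (integral_sub (intLf ζ2 h2t) (intLf ζ1 h1t)).symm
    rw [hsub]
    have hstep : |∫ θ in Θ, (Real.log (f ζ2 θ) * f ζ0 θ - Real.log (f ζ1 θ) * f ζ0 θ)| ≤
        ∫ θ in Θ, (K / δ * dist ζ2 ζ1) * f ζ0 θ := by
      rw [← Real.norm_eq_abs]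
      apply norm_integral_le_of_norm_le ((intf ζ0 hζ0t).const_mul _)
      filter_upwards [ae_restrict_mem ΘM] with θ hθ
      have h0 : (0:ℝ) ≤ f ζ0 θ := le_trans hδ.le (hflb ζ0 hζ0t θ hθ)
      rw [Real.norm_eq_abs, ← sub_mul, abs_mul, abs_of_nonneg h0]
      exact mul_le_mul_of_nonneg_right (lip ζ1 h1 ζ2 h2 θ hθ) h0
    calc |∫ θ in Θ, (Real.log (f ζ2 θ) * f ζ0 θ - Real.log (f ζ1 θ) * f ζ0 θ)| ≤
        ∫ θ in Θ, (K / δ * dist ζ2 ζ1) * f ζ0 θ := hstep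
      _ = (K / δ * dist ζ2 ζ1) * ∫ θ in Θ, f ζ0 θ := integral_const_mul _ _
      _ = K / δ * dist ζ2 ζ1 := by rw [hfdens ζ0 hζ0t, mul_one]
  -- uniform strong law
  have unif : ∀ᵐ ω ∂μ, ∀ ε > (0:ℝ), ∀ᶠ N : ℕ in atTop, ∀ ζ ∈ P,
      |(N : ℝ)⁻¹ * ∑ j ∈ Finset.range N, L ζ (θseq j ω) - g ζ| ≤ ε := by
    have unif1 : ∀ ε > (0:ℝ), ∀ᵐ ω ∂μ, ∀ᶠ N : ℕ in atTop, ∀ ζ ∈ P,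
        |(N : ℝ)⁻¹ * ∑ j ∈ Finset.range N, L ζ (θseq j ω) - g ζ| ≤ ε := by
      intro ε hε
      set r : ℝ := min (ρ / 2) (ε * δ / (3 * (K + 1))) with hrdef
      have hr0 : 0 < r := lt_min (by linarith) (by positivity)
      have hrρ : r < ρ := lt_of_le_of_lt (min_le_left _ _) (by linarith)
      have hrbound : K / δ * r ≤ ε / 3 := by
        have h1 : r ≤ ε * δ / (3 * (K + 1)) := min_le_right _ _
        calc K / δ * r ≤ K / δ * (ε * δ / (3 * (K + 1))) :=
              mul_le_mul_of_nonneg_left h1 (by positivity)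
          _ = ε / 3 * (K / (K + 1)) := by field_simp
          _ ≤ ε / 3 * 1 := by
              apply mul_le_mul_of_nonneg_left _ (by positivity)
              exact div_le_one_of_le₀ (by linarith) (by linarith)
          _ = ε / 3 := mul_one _
      obtain ⟨t, htP, htfin, htcov⟩ := finite_cover_balls_of_compact hP hr0
      have hae : ∀ᵐ ω ∂μ, ∀ ζ1 ∈ t,
          Tendsto (fun N : ℕ => (N : ℝ)⁻¹ * ∑ j ∈ Finset.range N, L ζ1 (θseq j ω))
            atTop (nhds (g ζ1)) :=
        (ae_ball_iff htfin.countable).2 (fun ζ1 h1 => slln ζ1 (hPPt (htP h1)))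
      filter_upwards [hae, hA] with ω hω hωA
      have hev : ∀ᶠ N : ℕ in atTop, ∀ ζ1 ∈ t,
          |(N : ℝ)⁻¹ * ∑ j ∈ Finset.range N, L ζ1 (θseq j ω) - g ζ1| ≤ ε / 3 := by
        rw [eventually_all_finite htfin]
        intro ζ1 h1
        obtain ⟨N0, hN0⟩ := Metric.tendsto_atTop.1 (hω ζ1 h1) (ε / 3) (by linarith)
        rw [eventually_atTop]
        exact ⟨N0, fun n hn => by
          have := hN0 n hn
          rw [Real.dist_eq] at this
          linarith⟩
      filter_upwards [hev] with N hN ζ hζP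
      obtain ⟨ζ1, h1t, hζball⟩ := Set.mem_iUnion₂.1 (htcov hζP)
      have h1P : ζ1 ∈ P := htP h1t
      have hdlt : dist ζ ζ1 < r := Metric.mem_ball.1 hζball
      have hζρ : ζ ∈ Metric.ball ζ1 ρ := Metric.mem_ball.2 (lt_trans hdlt hrρ)
      have hSdiff : |(N : ℝ)⁻¹ * ∑ j ∈ Finset.range N, L ζ (θseq j ω) -
          (N : ℝ)⁻¹ * ∑ j ∈ Finset.range N, L ζ1 (θseq j ω)| ≤ ε / 3 := by
        rcases Nat.eq_zero_or_pos N with hN0 | hN0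
        · subst hN0
          simpa using (by linarith : (0:ℝ) ≤ ε / 3)
        · have hNpos : (0:ℝ) < N := by exact_mod_cast hN0
          rw [← mul_sub, ← Finset.sum_sub_distrib, abs_mul, abs_inv, Nat.abs_cast]
          have hterm : ∀ j ∈ Finset.range N,
              |L ζ (θseq j ω) - L ζ1 (θseq j ω)| ≤ K / δ * dist ζ ζ1 := by
            intro j _
            have hθj := hωA j
            simp only [hLdef, Set.indicator_of_mem hθj]
            exact lip ζ1 h1P ζ hζρ (θseq j ω) hθj
          have hsum : |∑ j ∈ Finset.range N, (L ζ (θseq j ω) - L ζ1 (θseq j ω))| ≤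
              (N : ℝ) * (K / δ * dist ζ ζ1) := by
            calc |∑ j ∈ Finset.range N, (L ζ (θseq j ω) - L ζ1 (θseq j ω))| ≤
                ∑ j ∈ Finset.range N, |L ζ (θseq j ω) - L ζ1 (θseq j ω)| :=
                  Finset.abs_sum_le_sum_abs _ _
              _ ≤ ∑ _j ∈ Finset.range N, K / δ * dist ζ ζ1 := Finset.sum_le_sum hterm
              _ = (N : ℝ) * (K / δ * dist ζ ζ1) := by
                  rw [Finset.sum_const, Finset.card_range, nsmul_eq_mul]
          calc (N : ℝ)⁻¹ * |∑ j ∈ Finset.range N, (L ζ (θseq j ω) - L ζ1 (θseq j ω))| ≤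
              (N : ℝ)⁻¹ * ((N : ℝ) * (K / δ * dist ζ ζ1)) :=
                mul_le_mul_of_nonneg_left hsum (by positivity)
            _ = K / δ * dist ζ ζ1 := by field_simp
            _ ≤ K / δ * r := mul_le_mul_of_nonneg_left hdlt.le (by positivity)
            _ ≤ ε / 3 := hrbound
      have hgdiff : |g ζ1 - g ζ| ≤ ε / 3 := by
        rw [abs_sub_comm]
        calc |g ζ - g ζ1| ≤ K / δ * dist ζ ζ1 := glip ζ1 h1P ζ hζρ
          _ ≤ K / δ * r := mul_le_mul_of_nonneg_left hdlt.le (by positivity)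
          _ ≤ ε / 3 := hrbound
      have hmid := hN ζ1 h1t
      set A := (N : ℝ)⁻¹ * ∑ j ∈ Finset.range N, L ζ (θseq j ω) with hA1
      set B := (N : ℝ)⁻¹ * ∑ j ∈ Finset.range N, L ζ1 (θseq j ω) with hB1
      have key : |A - g ζ| ≤ |A - B| + |B - g ζ1| + |g ζ1 - g ζ| := by
        have h1 := abs_add_le (A - B) (B - g ζ1)
        have h2 := abs_add_le ((A - B) + (B - g ζ1)) (g ζ1 - g ζ)
        have h3 : A - g ζ = ((A - B) + (B - g ζ1)) + (g ζ1 - g ζ) := by ring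
        rw [h3]
        linarith
      linarith
    have hall := ae_all_iff.2 (fun k : ℕ => unif1 ((k : ℝ) + 1)⁻¹ (by positivity))
    filter_upwards [hall] with ω hω ε hε
    obtain ⟨k, hk⟩ := exists_nat_gt ε⁻¹
    have hpos : (0:ℝ) < (k : ℝ) + 1 := by positivity
    have h1 : 1 < ε * ((k : ℝ) + 1) := by
      have h2 : ε⁻¹ < (k : ℝ) + 1 := lt_of_lt_of_le hk (by linarith)
      have h3 := mul_lt_mul_of_pos_left h2 hε
      rwa [mul_inv_cancel₀ hε.ne'] at h3
    have hk' : ((k : ℝ) + 1)⁻¹ ≤ ε := by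
      have h2 : ((k : ℝ) + 1)⁻¹ * 1 ≤ ((k : ℝ) + 1)⁻¹ * (ε * ((k : ℝ) + 1)) :=
        mul_le_mul_of_nonneg_left h1.le (by positivity)
      rw [mul_one] at h2
      calc ((k : ℝ) + 1)⁻¹ ≤ ((k : ℝ) + 1)⁻¹ * (ε * ((k : ℝ) + 1)) := h2
        _ = ε := by field_simp
    filter_upwards [hω k] with N hN ζ hζP
    exact le_trans (hN ζ hζP) hk'
  -- continuity of g on P
  have gcont : ContinuousOn g P := by
    intro ζ1 h1
    rw [Metric.continuousWithinAt_iff]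
    intro ε hε
    refine ⟨min ρ (ε * δ / (K + 1)), lt_min hρ0 (by positivity), fun ζ2 _ hd => ?_⟩
    have hball : ζ2 ∈ Metric.ball ζ1 ρ :=
      Metric.mem_ball.2 (lt_of_lt_of_le hd (min_le_left _ _))
    rw [Real.dist_eq]
    calc |g ζ2 - g ζ1| ≤ K / δ * dist ζ2 ζ1 := glip ζ1 h1 ζ2 hball
      _ ≤ K / δ * (ε * δ / (K + 1)) :=
          mul_le_mul_of_nonneg_left (le_of_lt (lt_of_lt_of_le hd (min_le_right _ _)))
            (by positivity)
      _ = ε * (K / (K + 1)) := by field_simp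
      _ < ε * 1 := by
          apply mul_lt_mul_of_pos_left _ hε
          rw [div_lt_one (by linarith)]
          linarith
      _ = ε := mul_one _
  -- unique maximizer
  have gmax : ∀ ζ ∈ P, ζ ≠ ζ0 → g ζ < g ζ0 := by
    intro ζ hζP hne
    have hζt : ζ ∈ Pt := hPPt hζP
    have hle : g ζ ≤ g ζ0 := by
      have hpt : ∀ θ ∈ Θ, Real.log (f ζ θ) * f ζ0 θ ≤
          Real.log (f ζ0 θ) * f ζ0 θ + (f ζ θ - f ζ0 θ) := by
        intro θ hθ
        have h0 : 0 < f ζ0 θ := lt_of_lt_of_le hδ (hflb ζ0 hζ0t θ hθ)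
        have h1 : 0 < f ζ θ := lt_of_lt_of_le hδ (hflb ζ hζt θ hθ)
        have hlog : Real.log (f ζ θ) - Real.log (f ζ0 θ) ≤ f ζ θ / f ζ0 θ - 1 := by
          rw [← Real.log_div h1.ne' h0.ne']
          exact Real.log_le_sub_one_of_pos (by positivity)
        have hm := mul_le_mul_of_nonneg_right hlog h0.le
        have heq : (f ζ θ / f ζ0 θ - 1) * f ζ0 θ = f ζ θ - f ζ0 θ := by field_simp
        nlinarith [hm]
      have hint1 := intLf ζ hζt
      have hint0 := intLf ζ0 hζ0t
      have hintsub : IntegrableOn (fun θ => f ζ θ - f ζ0 θ) Θ volume := by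
        exact (intf ζ hζt).sub (intf ζ0 hζ0t)
      have h2 : (∫ θ in Θ, Real.log (f ζ θ) * f ζ0 θ) ≤
          ∫ θ in Θ, (Real.log (f ζ0 θ) * f ζ0 θ + (f ζ θ - f ζ0 θ)) :=
        setIntegral_mono_on hint1 (hint0.add hintsub) ΘM hpt
      rw [integral_add hint0 hintsub, integral_sub (intf ζ hζt) (intf ζ0 hζ0t),
        hfdens ζ hζt, hfdens ζ0 hζ0t] at h2
      simp only [hgdef]
      linarith
    have hne' : g ζ ≠ g ζ0 := by
      intro h
      exact hne ((hident ζ hζP ζ0 hζ0 ζ0 hζ0).1 (by simpa [hgdef] using h))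
    exact lt_of_le_of_ne hle hne'
  -- conclusion
  filter_upwards [unif, hA] with ω hunif hωA
  rw [Metric.tendsto_atTop]
  intro ε hε
  have hQc : IsCompact (P ∩ {ζ | ε ≤ dist ζ ζ0}) :=
    hP.inter_right (isClosed_le continuous_const (continuous_id.dist continuous_const))
  rcases Set.eq_empty_or_nonempty (P ∩ {ζ | ε ≤ dist ζ ζ0}) with hQe | hQne
  · refine ⟨0, fun N _ => ?_⟩
    by_contra hcon
    push_neg at hcon
    have hmem : ζhat N ω ∈ P ∩ {ζ | ε ≤ dist ζ ζ0} := ⟨(hζhat N ω).1, hcon⟩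
    rw [hQe] at hmem
    exact hmem
  · obtain ⟨ζm, hζmQ, hζmmax⟩ := hQc.exists_isMaxOn hQne (gcont.mono Set.inter_subset_left)
    have hζmP : ζm ∈ P := hζmQ.1
    have hζmne : ζm ≠ ζ0 := by
      intro h
      have h2 : ε ≤ dist ζm ζ0 := hζmQ.2
      rw [h, dist_self] at h2
      linarith
    have hη0 : 0 < g ζ0 - g ζm := sub_pos.2 (gmax ζm hζmP hζmne)
    set η := g ζ0 - g ζm with hη
    obtain ⟨N0, hN0⟩ := eventually_atTop.1 (hunif (η / 3) (by linarith))
    refine ⟨max N0 1, fun N hN => ?_⟩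
    have hN1 : 1 ≤ N := le_trans (le_max_right _ _) hN
    have hNN0 : N0 ≤ N := le_trans (le_max_left _ _) hN
    have hhatP := (hζhat N ω).1
    have hNpos : (0:ℝ) < N := by exact_mod_cast hN1
    have hS : (N : ℝ)⁻¹ * ∑ j ∈ Finset.range N, L ζ0 (θseq j ω) ≤
        (N : ℝ)⁻¹ * ∑ j ∈ Finset.range N, L (ζhat N ω) (θseq j ω) := by
      have hsumeq : ∀ ζ', (∑ j ∈ Finset.range N, L ζ' (θseq j ω)) =
          ∑ j ∈ Finset.range N, Real.log (f ζ' (θseq j ω)) := by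
        intro ζ'
        refine Finset.sum_congr rfl (fun j _ => ?_)
        simp [hLdef, Set.indicator_of_mem (hωA j)]
      have hminim := (hζhat N ω).2 ζ0 hζ0
      rw [neg_mul, neg_mul, neg_le_neg_iff] at hminim
      rw [hsumeq ζ0, hsumeq (ζhat N ω)]
      rw [one_div] at hminim
      exact hminim
    have hb0 := abs_le.1 (hN0 N hNN0 ζ0 hζ0)
    have hbh := abs_le.1 (hN0 N hNN0 (ζhat N ω) hhatP)
    have hgap : g ζm < g (ζhat N ω) := by
      have e1 := hb0.1
      have e2 := hbh.2
      have e3 : η = g ζ0 - g ζm := hη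
      linarith
    by_contra hcon
    push_neg at hcon
    have hmem : ζhat N ω ∈ P ∩ {ζ | ε ≤ dist ζ ζ0} := ⟨hhatP, hcon⟩
    exact absurd (hζmmax hmem) (not_le.2 hgap)
end

section
/- Let A be an n×n real matrix with ‖exp(tA)‖ ≤ β e^{−ρt} for all t ≥ 0 with constants β, ρ > 0. Let B : [0,∞) → ℝ^{n×n} be measurable and bounded with B(t) → 0 as t → ∞, and let y : [0,∞) → ℝⁿ be locally square integrable with limsup_{T→∞} (1/T) ∫_0^T ‖y(s)‖² ds < ∞. Define z(t) = ∫_0^t exp((t−s)A) B(s) y(s) ds. Then lim_{T→∞} (1/T) ∫_0^T ‖z(t)‖² dt = 0. -/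
open MeasureTheory Filter
open scoped ENNReal NNReal

private lemma aux_exp_int {β ρ : ℝ} (hβ : 0 ≤ β) (hρ : 0 < ρ) {a : ℝ} (ha : 0 ≤ a) :
    ∫ u in (0:ℝ)..a, β * Real.exp (-ρ * u) ≤ β / ρ := by
  have hne : (-ρ) ≠ 0 := by linarith
  have h2 : (∫ u in (0:ℝ)..a, Real.exp (-ρ * u)) = (-ρ)⁻¹ * (Real.exp (-ρ * a) - 1) := by
    rw [intervalIntegral.integral_comp_mul_left Real.exp hne]
    simp [integral_exp, smul_eq_mul]
  rw [intervalIntegral.integral_const_mul, h2]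
  have h3 : 0 < Real.exp (-ρ * a) := Real.exp_pos _
  have h4 : Real.exp (-ρ * a) ≤ 1 := Real.exp_le_one_iff.mpr (by nlinarith)
  rw [div_eq_mul_inv]
  have : (-ρ)⁻¹ * (Real.exp (-ρ * a) - 1) = (1 - Real.exp (-ρ * a)) * ρ⁻¹ := by
    field_simp
    ring
  rw [this]
  have hρi : 0 < ρ⁻¹ := by positivity
  nlinarith [mul_nonneg (mul_nonneg hβ h3.le) hρi.le]

private lemma aux_lint1 {β ρ : ℝ} (hβ : 0 ≤ β) (hρ : 0 < ρ) (a b : ℝ) :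
    ∫⁻ x in Set.Ioc a b, ENNReal.ofReal (β * Real.exp (-ρ * (x - a))) ≤ ENNReal.ofReal (β / ρ) := by
  rcases lt_or_ge b a with h | h
  · rw [Set.Ioc_eq_empty (by exact not_lt.mpr h.le), Measure.restrict_empty, lintegral_zero_measure]
    exact zero_le
  · rw [← ofReal_integral_eq_lintegral_ofReal
      ((by continuity : Continuous fun x : ℝ => β * Real.exp (-ρ * (x - a))).integrableOn_Ioc)
      (ae_of_all _ fun x => by positivity)]
    apply ENNReal.ofReal_le_ofReal
    rw [← intervalIntegral.integral_of_le h,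
      intervalIntegral.integral_comp_sub_right (fun u => β * Real.exp (-ρ * u)) a]
    simpa using aux_exp_int hβ hρ (a := b - a) (by linarith)

private lemma aux_lint2 {β ρ : ℝ} (hβ : 0 ≤ β) (hρ : 0 < ρ) (a b : ℝ) :
    ∫⁻ x in Set.Ioc a b, ENNReal.ofReal (β * Real.exp (-ρ * (b - x))) ≤ ENNReal.ofReal (β / ρ) := by
  rcases lt_or_ge b a with h | h
  · rw [Set.Ioc_eq_empty (by exact not_lt.mpr h.le), Measure.restrict_empty, lintegral_zero_measure]
    exact zero_le
  · rw [← ofReal_integral_eq_lintegral_ofReal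
      ((by continuity : Continuous fun x : ℝ => β * Real.exp (-ρ * (b - x))).integrableOn_Ioc)
      (ae_of_all _ fun x => by positivity)]
    apply ENNReal.ofReal_le_ofReal
    rw [← intervalIntegral.integral_of_le h,
      intervalIntegral.integral_comp_sub_left (fun u => β * Real.exp (-ρ * u)) b]
    simpa using aux_exp_int hβ hρ (a := b - a) (by linarith)

set_option maxHeartbeats 1600000 in
/-- If `A` is exponentially stable, `B(t)` is bounded and tends to `0`, and `y`
has finite long-run-average square norm, then the convolution
`z(t) = ∫_0^t exp((t−s)A) B(s) y(s) ds` satisfies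
`(1/T) ∫_0^T ‖z(t)‖² dt → 0` as `T → ∞`. -/
theorem stmt_11 {n : ℕ} (β ρ : ℝ) (hβ : 0 < β) (hρ : 0 < ρ)
    (A : EuclideanSpace ℝ (Fin n) →L[ℝ] EuclideanSpace ℝ (Fin n))
    (hA : ∀ t : ℝ, 0 ≤ t → ‖NormedSpace.exp (t • A)‖ ≤ β * Real.exp (-ρ * t))
    (B : ℝ → (EuclideanSpace ℝ (Fin n) →L[ℝ] EuclideanSpace ℝ (Fin n)))
    (hBmeas : StronglyMeasurable B)
    (hBbdd : ∃ C : ℝ, ∀ t : ℝ, 0 ≤ t → ‖B t‖ ≤ C)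
    (hBconv : Tendsto B atTop (nhds 0))
    (y : ℝ → EuclideanSpace ℝ (Fin n))
    (hymeas : StronglyMeasurable y)
    (hyloc : ∀ T : ℝ, 0 < T → IntervalIntegrable (fun s => ‖y s‖ ^ 2) volume 0 T)
    (hybdd : ∃ C : ℝ, ∀ᶠ T in atTop, (1 / T) * ∫ s in (0:ℝ)..T, ‖y s‖ ^ 2 ≤ C) :
    Tendsto (fun T : ℝ =>
        (1 / T) * ∫ t in (0:ℝ)..T,
          ‖∫ s in (0:ℝ)..t, (NormedSpace.exp ((t - s) • A)) (B s (y s))‖ ^ 2)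
      atTop (nhds 0) := by
  classical
  obtain ⟨C, hC⟩ := hBbdd
  have hC0 : 0 ≤ C := le_trans (norm_nonneg _) (hC 0 le_rfl)
  have hβρ : 0 ≤ β / ρ := by positivity
  set q : ℝ → EuclideanSpace ℝ (Fin n) := fun s => B s (y s) with hqdef
  have hqmeas : StronglyMeasurable q :=
    isBoundedBilinearMap_apply.continuous.comp_stronglyMeasurable (hBmeas.prodMk hymeas)
  set g : ℝ → ℝ := fun s => ‖q s‖ ^ 2 with hgdef
  have hgmeas : StronglyMeasurable g := (continuous_pow 2).comp_stronglyMeasurable hqmeas.norm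
  have hgnn : ∀ s, 0 ≤ g s := fun s => sq_nonneg _
  have hy2 : ∀ T : ℝ, IntegrableOn (fun s => ‖y s‖ ^ 2) (Set.Ioc 0 T) volume := by
    intro T
    rcases le_or_gt T 0 with h | h
    · rw [Set.Ioc_eq_empty (not_lt.mpr h)]; exact integrableOn_empty
    · exact (hyloc T h).1
  have hqbound : ∀ s : ℝ, 0 ≤ s → g s ≤ C ^ 2 * ‖y s‖ ^ 2 := by
    intro s hs
    have h1 : ‖q s‖ ≤ C * ‖y s‖ :=
      le_trans ((B s).le_opNorm (y s)) (mul_le_mul_of_nonneg_right (hC s hs) (norm_nonneg _))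
    have hgs : g s = ‖q s‖ ^ 2 := rfl
    rw [hgs]
    nlinarith [norm_nonneg (q s), norm_nonneg (y s)]
  have hgint : ∀ T : ℝ, IntegrableOn g (Set.Ioc 0 T) volume := by
    intro T
    refine Integrable.mono' ((hy2 T).const_mul (C ^ 2)) hgmeas.aestronglyMeasurable ?_
    refine (ae_restrict_iff' measurableSet_Ioc).2 (ae_of_all _ fun s hs => ?_)
    rw [Real.norm_of_nonneg (hgnn s)]
    exact hqbound s hs.1.le
  -- joint measurability of the integrand
  set S : Set (ℝ × ℝ) := {p : ℝ × ℝ | 0 < p.2 ∧ p.2 ≤ p.1} with hSdef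
  have hS : MeasurableSet S :=
    (measurableSet_lt measurable_const measurable_snd).inter
      (measurableSet_le measurable_snd measurable_fst)
  set G : ℝ × ℝ → EuclideanSpace ℝ (Fin n) :=
    fun p => NormedSpace.exp ((p.1 - p.2) • A) (q p.2) with hGdef
  have hGmeas : StronglyMeasurable G := by
    have h1 : Continuous fun p : ℝ × ℝ => NormedSpace.exp ((p.1 - p.2) • A) :=
      (continuous_iff_continuousAt.2 fun x =>
        (NormedSpace.exp_analytic (𝕂 := ℝ) x).continuousAt).comp ((continuous_fst.sub continuous_snd).smul continuous_const)
    exact isBoundedBilinearMap_apply.continuous.comp_stronglyMeasurable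
      (h1.stronglyMeasurable.prodMk (hqmeas.comp_measurable measurable_snd))
  set K : ℝ → EuclideanSpace ℝ (Fin n) := fun t => ∫ s, S.indicator G (t, s) with hKdef
  have hKmeas : StronglyMeasurable K := (hGmeas.indicator hS).integral_prod_right'
  have hz_eq : ∀ t : ℝ, 0 ≤ t →
      (∫ s in (0:ℝ)..t, (NormedSpace.exp ((t - s) • A)) (B s (y s))) = K t := by
    intro t ht
    rw [intervalIntegral.integral_of_le ht, ← MeasureTheory.integral_indicator measurableSet_Ioc]
    have hfe : ((Set.Ioc 0 t).indicator fun s => (NormedSpace.exp ((t - s) • A)) (B s (y s)))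
        = fun s => S.indicator G (t, s) := by
      funext s
      by_cases hs : s ∈ Set.Ioc 0 t
      · rw [Set.indicator_of_mem hs, Set.indicator_of_mem (show (t, s) ∈ S from ⟨hs.1, hs.2⟩)]
      · rw [Set.indicator_of_notMem hs,
          Set.indicator_of_notMem (show (t, s) ∉ S from fun h => hs ⟨h.1, h.2⟩)]
    rw [hfe]
  -- pointwise Cauchy-Schwarz bound
  have hconj : Real.HolderConjugate 2 2 := Real.HolderConjugate.two_two
  have hsqrt : ∀ x : ℝ≥0∞, (x ^ ((2:ℝ)⁻¹)) ^ (2:ℕ) = x := fun x => by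
    rw [← ENNReal.rpow_natCast (x ^ ((2:ℝ)⁻¹)) 2, ← ENNReal.rpow_mul]
    norm_num
  have key1 : ∀ t : ℝ, 0 < t → ENNReal.ofReal (‖K t‖ ^ 2)
      ≤ ENNReal.ofReal (β / ρ) *
        ∫⁻ s in Set.Ioc 0 t, ENNReal.ofReal (β * Real.exp (-ρ * (t - s)) * g s) := by
    intro t ht
    set E1 : ℝ → ℝ≥0∞ := fun s => ENNReal.ofReal (β * Real.exp (-ρ * (t - s))) with hE1def
    have hE1meas : Measurable E1 :=
      (continuous_const.mul (Real.continuous_exp.comp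
        (continuous_const.mul (continuous_const.sub continuous_id)))).measurable.ennreal_ofReal
    have hE1ne0 : ∀ s, E1 s ≠ 0 := fun s =>
      (ENNReal.ofReal_pos.2 (by positivity)).ne'
    have hE1top : ∀ s, E1 s ≠ ∞ := fun s => ENNReal.ofReal_ne_top
    have hhalf : ∀ s, E1 s ^ ((2:ℝ)⁻¹) * E1 s ^ ((2:ℝ)⁻¹) = E1 s := fun s => by
      rw [← ENNReal.rpow_add _ _ (hE1ne0 s) (hE1top s)]
      norm_num
    have ha : (‖K t‖₊ : ℝ≥0∞) ≤ ∫⁻ s in Set.Ioc 0 t,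
        ENNReal.ofReal (β * Real.exp (-ρ * (t - s)) * ‖q s‖) := by
      have h0 : (‖K t‖₊ : ℝ≥0∞) ≤ ∫⁻ s, ‖S.indicator G (t, s)‖₊ ∂volume :=
        enorm_integral_le_lintegral_enorm _
      have h1 : (fun s => ((‖S.indicator G (t, s)‖₊ : ℝ≥0∞)))
          = (Set.Ioc 0 t).indicator fun s => ((‖G (t, s)‖₊ : ℝ≥0∞)) := by
        funext s
        by_cases hs : s ∈ Set.Ioc 0 t
        · rw [Set.indicator_of_mem hs, Set.indicator_of_mem (show (t, s) ∈ S from ⟨hs.1, hs.2⟩)]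
        · rw [Set.indicator_of_notMem hs,
            Set.indicator_of_notMem (show (t, s) ∉ S from fun h => hs ⟨h.1, h.2⟩)]
          simp
      refine h0.trans ?_
      rw [h1, lintegral_indicator measurableSet_Ioc]
      refine setLIntegral_mono' measurableSet_Ioc fun s hs => ?_
      rw [show ((‖G (t, s)‖₊ : ℝ≥0∞)) = ENNReal.ofReal ‖G (t, s)‖ from (ofReal_norm _).symm]
      refine ENNReal.ofReal_le_ofReal ?_
      calc ‖G (t, s)‖ ≤ ‖NormedSpace.exp ((t - s) • A)‖ * ‖q s‖ := by
            exact (NormedSpace.exp ((t - s) • A)).le_opNorm (q s)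
      _ ≤ (β * Real.exp (-ρ * (t - s))) * ‖q s‖ :=
            mul_le_mul_of_nonneg_right (hA (t - s) (by linarith [hs.2])) (norm_nonneg _)
    have hq' : Measurable fun s => ENNReal.ofReal ‖q s‖ :=
      hqmeas.measurable.norm.ennreal_ofReal
    have hH := ENNReal.lintegral_mul_le_Lp_mul_Lq (volume.restrict (Set.Ioc 0 t)) hconj
      ((hE1meas.pow_const ((2:ℝ)⁻¹)).aemeasurable)
      (((hE1meas.pow_const ((2:ℝ)⁻¹)).mul hq').aemeasurable)
    have hpt : ∀ s : ℝ, ENNReal.ofReal (β * Real.exp (-ρ * (t - s)) * ‖q s‖)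
        = ((fun s => E1 s ^ ((2:ℝ)⁻¹)) * fun s => E1 s ^ ((2:ℝ)⁻¹) * ENNReal.ofReal ‖q s‖) s :=
      fun s => by
        rw [Pi.mul_apply, ← mul_assoc, hhalf s, ENNReal.ofReal_mul (by positivity)]
    have hr1 : (∫⁻ s in Set.Ioc 0 t, (fun s => E1 s ^ ((2:ℝ)⁻¹)) s ^ (2:ℝ))
        = ∫⁻ s in Set.Ioc 0 t, E1 s := by
      refine lintegral_congr fun s => ?_
      rw [← ENNReal.rpow_mul]
      norm_num
    have hr2 : (∫⁻ s in Set.Ioc 0 t, ((fun s => E1 s ^ ((2:ℝ)⁻¹) * ENNReal.ofReal ‖q s‖) s) ^ (2:ℝ))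
        = ∫⁻ s in Set.Ioc 0 t, E1 s * ENNReal.ofReal (g s) := by
      refine lintegral_congr fun s => ?_
      rw [ENNReal.mul_rpow_of_nonneg _ _ (by norm_num : (0:ℝ) ≤ 2), ← ENNReal.rpow_mul]
      norm_num
      rw [← ofReal_norm, ← ENNReal.ofReal_pow (norm_nonneg _)]
    have hb : (∫⁻ s in Set.Ioc 0 t, ENNReal.ofReal (β * Real.exp (-ρ * (t - s)) * ‖q s‖))
        ≤ ((∫⁻ s in Set.Ioc 0 t, E1 s) ^ ((2:ℝ)⁻¹)) *
          ((∫⁻ s in Set.Ioc 0 t, E1 s * ENNReal.ofReal (g s)) ^ ((2:ℝ)⁻¹)) := by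
      calc (∫⁻ s in Set.Ioc 0 t, ENNReal.ofReal (β * Real.exp (-ρ * (t - s)) * ‖q s‖))
          = ∫⁻ s in Set.Ioc 0 t,
            ((fun s => E1 s ^ ((2:ℝ)⁻¹)) * fun s => E1 s ^ ((2:ℝ)⁻¹) * ENNReal.ofReal ‖q s‖) s :=
            lintegral_congr hpt
      _ ≤ ((∫⁻ s in Set.Ioc 0 t, (fun s => E1 s ^ ((2:ℝ)⁻¹)) s ^ (2:ℝ)) ^ ((1:ℝ)/2)) *
          ((∫⁻ s in Set.Ioc 0 t,
            ((fun s => E1 s ^ ((2:ℝ)⁻¹) * ENNReal.ofReal ‖q s‖) s) ^ (2:ℝ)) ^ ((1:ℝ)/2)) := hH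
      _ = _ := by rw [hr1, hr2, one_div]
    have hE1int : (∫⁻ s in Set.Ioc 0 t, E1 s) ≤ ENNReal.ofReal (β / ρ) :=
      aux_lint2 hβ.le hρ 0 t
    have hptg : ∀ s : ℝ, E1 s * ENNReal.ofReal (g s)
        = ENNReal.ofReal (β * Real.exp (-ρ * (t - s)) * g s) := fun s => by
      rw [ENNReal.ofReal_mul (by positivity)]
    calc ENNReal.ofReal (‖K t‖ ^ 2) = ((‖K t‖₊ : ℝ≥0∞)) ^ (2:ℕ) := by
          rw [ENNReal.ofReal_pow (norm_nonneg _), show ENNReal.ofReal ‖K t‖ = (‖K t‖₊ : ℝ≥0∞) from ofReal_norm _]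
    _ ≤ (∫⁻ s in Set.Ioc 0 t, ENNReal.ofReal (β * Real.exp (-ρ * (t - s)) * ‖q s‖)) ^ (2:ℕ) := by
          rw [pow_two, pow_two]; exact mul_le_mul' ha ha
    _ ≤ (((∫⁻ s in Set.Ioc 0 t, E1 s) ^ ((2:ℝ)⁻¹)) *
          ((∫⁻ s in Set.Ioc 0 t, E1 s * ENNReal.ofReal (g s)) ^ ((2:ℝ)⁻¹))) ^ (2:ℕ) := by
          rw [pow_two, pow_two]; exact mul_le_mul' hb hb
    _ = (∫⁻ s in Set.Ioc 0 t, E1 s) * (∫⁻ s in Set.Ioc 0 t, E1 s * ENNReal.ofReal (g s)) := by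
          rw [mul_pow, hsqrt, hsqrt]
    _ ≤ ENNReal.ofReal (β / ρ) * (∫⁻ s in Set.Ioc 0 t, E1 s * ENNReal.ofReal (g s)) :=
          mul_le_mul_left hE1int _
    _ = ENNReal.ofReal (β / ρ) *
          ∫⁻ s in Set.Ioc 0 t, ENNReal.ofReal (β * Real.exp (-ρ * (t - s)) * g s) := by
          rw [lintegral_congr hptg]
  -- Tonelli step
  set χ : ℝ × ℝ → ℝ≥0∞ :=
    S.indicator (fun p => ENNReal.ofReal (β * Real.exp (-ρ * (p.1 - p.2)) * g p.2)) with hχdef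
  have hχmeas : Measurable χ := by
    refine Measurable.indicator ?_ hS
    exact ((continuous_const.mul (Real.continuous_exp.comp
      (continuous_const.mul (continuous_fst.sub continuous_snd)))).measurable.mul
      (hgmeas.measurable.comp measurable_snd)).ennreal_ofReal
  have hχeq : ∀ t : ℝ, (∫⁻ s in Set.Ioc 0 t, ENNReal.ofReal (β * Real.exp (-ρ * (t - s)) * g s))
      = ∫⁻ s, χ (t, s) := by
    intro t
    rw [← lintegral_indicator measurableSet_Ioc]
    refine lintegral_congr fun s => ?_
    rw [hχdef]
    by_cases hs : s ∈ Set.Ioc 0 t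
    · rw [Set.indicator_of_mem hs, Set.indicator_of_mem (show (t, s) ∈ S from ⟨hs.1, hs.2⟩)]
    · rw [Set.indicator_of_notMem hs,
        Set.indicator_of_notMem (show (t, s) ∉ S from fun h => hs ⟨h.1, h.2⟩)]
  have key2 : ∀ T : ℝ, 0 < T →
      (∫⁻ t in Set.Ioc 0 T, ∫⁻ s, χ (t, s))
        ≤ ENNReal.ofReal (β / ρ) * ENNReal.ofReal (∫ s in Set.Ioc 0 T, g s) := by
    intro T hT
    have hswap : (∫⁻ t in Set.Ioc 0 T, ∫⁻ s, χ (t, s))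
        = ∫⁻ s, ∫⁻ t in Set.Ioc 0 T, χ (t, s) :=
      lintegral_lintegral_swap hχmeas.aemeasurable
    rw [hswap]
    have claim : ∀ s : ℝ, (∫⁻ t in Set.Ioc 0 T, χ (t, s))
        ≤ (Set.Ioc 0 T).indicator
            (fun s' => ENNReal.ofReal (β / ρ) * ENNReal.ofReal (g s')) s := by
      intro s
      by_cases hs : s ∈ Set.Ioc 0 T
      · rw [Set.indicator_of_mem hs]
        calc (∫⁻ t in Set.Ioc 0 T, χ (t, s))
            ≤ ∫⁻ t in Set.Ioc 0 T, (Set.Icc s T).indicator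
                (fun t => ENNReal.ofReal (β * Real.exp (-ρ * (t - s))) * ENNReal.ofReal (g s)) t := by
              refine setLIntegral_mono' measurableSet_Ioc fun t ht => ?_
              rw [hχdef]
              by_cases hts : (t, s) ∈ S
              · rw [Set.indicator_of_mem hts,
                  Set.indicator_of_mem (show t ∈ Set.Icc s T from ⟨hts.2, ht.2⟩),
                  ENNReal.ofReal_mul (by positivity)]
              · rw [Set.indicator_of_notMem hts]
                exact zero_le
        _ ≤ ∫⁻ t, (Set.Icc s T).indicator
                (fun t => ENNReal.ofReal (β * Real.exp (-ρ * (t - s))) * ENNReal.ofReal (g s)) t :=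
              setLIntegral_le_lintegral _ _
        _ = ∫⁻ t in Set.Icc s T,
                ENNReal.ofReal (β * Real.exp (-ρ * (t - s))) * ENNReal.ofReal (g s) :=
              lintegral_indicator measurableSet_Icc _
        _ = ∫⁻ t in Set.Ioc s T,
                ENNReal.ofReal (β * Real.exp (-ρ * (t - s))) * ENNReal.ofReal (g s) :=
              (setLIntegral_congr Ioc_ae_eq_Icc).symm
        _ = (∫⁻ t in Set.Ioc s T, ENNReal.ofReal (β * Real.exp (-ρ * (t - s))))
                * ENNReal.ofReal (g s) :=
              lintegral_mul_const' _ _ ENNReal.ofReal_ne_top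
        _ ≤ ENNReal.ofReal (β / ρ) * ENNReal.ofReal (g s) :=
              mul_le_mul_left (aux_lint1 hβ.le hρ s T) _
      · rw [Set.indicator_of_notMem hs]
        have hz : ∀ t ∈ Set.Ioc 0 T, χ (t, s) = 0 := by
          intro t ht
          rw [hχdef, Set.indicator_of_notMem]
          rintro ⟨h1, h2⟩
          exact hs ⟨h1, le_trans h2 ht.2⟩
        calc (∫⁻ t in Set.Ioc 0 T, χ (t, s))
            ≤ ∫⁻ _t in Set.Ioc 0 T, (0:ℝ≥0∞) :=
              setLIntegral_mono' measurableSet_Ioc fun t ht => le_of_eq (hz t ht)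
        _ = 0 := by simp
    calc (∫⁻ s, ∫⁻ t in Set.Ioc 0 T, χ (t, s))
        ≤ ∫⁻ s, (Set.Ioc 0 T).indicator
            (fun s' => ENNReal.ofReal (β / ρ) * ENNReal.ofReal (g s')) s :=
          lintegral_mono claim
    _ = ∫⁻ s in Set.Ioc 0 T, ENNReal.ofReal (β / ρ) * ENNReal.ofReal (g s) :=
          lintegral_indicator measurableSet_Ioc _
    _ = ENNReal.ofReal (β / ρ) * ∫⁻ s in Set.Ioc 0 T, ENNReal.ofReal (g s) :=
          lintegral_const_mul' _ _ ENNReal.ofReal_ne_top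
    _ = ENNReal.ofReal (β / ρ) * ENNReal.ofReal (∫ s in Set.Ioc 0 T, g s) := by
          rw [ofReal_integral_eq_lintegral_ofReal (hgint T) (ae_of_all _ hgnn)]
  -- main estimate over [0, T]
  have zsq_meas : StronglyMeasurable fun t => ‖K t‖ ^ 2 :=
    (continuous_pow 2).comp_stronglyMeasurable hKmeas.norm
  have main : ∀ T : ℝ, 0 < T →
      (∫ t in (0:ℝ)..T, ‖∫ s in (0:ℝ)..t, (NormedSpace.exp ((t - s) • A)) (B s (y s))‖ ^ 2)
        ≤ (β / ρ) * ((β / ρ) * ∫ s in Set.Ioc 0 T, g s) := by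
    intro T hT
    have hIg : 0 ≤ ∫ s in Set.Ioc 0 T, g s :=
      setIntegral_nonneg measurableSet_Ioc fun s _ => hgnn s
    have h1 : (∫ t in (0:ℝ)..T,
          ‖∫ s in (0:ℝ)..t, (NormedSpace.exp ((t - s) • A)) (B s (y s))‖ ^ 2)
        = ∫ t in Set.Ioc 0 T, ‖K t‖ ^ 2 := by
      rw [intervalIntegral.integral_of_le hT.le]
      refine setIntegral_congr_fun measurableSet_Ioc fun t ht => ?_
      rw [hz_eq t ht.1.le]
    have h2 : (∫ t in Set.Ioc 0 T, ‖K t‖ ^ 2)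
        = (∫⁻ t in Set.Ioc 0 T, ENNReal.ofReal (‖K t‖ ^ 2)).toReal := by
      rw [integral_eq_lintegral_of_nonneg_ae (ae_of_all _ fun t => sq_nonneg _)
        zsq_meas.aestronglyMeasurable]
    have h3 : (∫⁻ t in Set.Ioc 0 T, ENNReal.ofReal (‖K t‖ ^ 2))
        ≤ ENNReal.ofReal (β / ρ) *
          (ENNReal.ofReal (β / ρ) * ENNReal.ofReal (∫ s in Set.Ioc 0 T, g s)) := by
      calc (∫⁻ t in Set.Ioc 0 T, ENNReal.ofReal (‖K t‖ ^ 2))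
          ≤ ∫⁻ t in Set.Ioc 0 T, ENNReal.ofReal (β / ρ) * ∫⁻ s, χ (t, s) := by
            refine setLIntegral_mono' measurableSet_Ioc fun t ht => ?_
            rw [← hχeq t]
            exact key1 t ht.1
      _ = ENNReal.ofReal (β / ρ) * ∫⁻ t in Set.Ioc 0 T, ∫⁻ s, χ (t, s) :=
            lintegral_const_mul' _ _ ENNReal.ofReal_ne_top
      _ ≤ ENNReal.ofReal (β / ρ) *
            (ENNReal.ofReal (β / ρ) * ENNReal.ofReal (∫ s in Set.Ioc 0 T, g s)) :=
            mul_le_mul_right (key2 T hT) _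
    rw [h1, h2]
    have hfin : (ENNReal.ofReal (β / ρ) *
        (ENNReal.ofReal (β / ρ) * ENNReal.ofReal (∫ s in Set.Ioc 0 T, g s))) ≠ ∞ :=
      ENNReal.mul_ne_top ENNReal.ofReal_ne_top
        (ENNReal.mul_ne_top ENNReal.ofReal_ne_top ENNReal.ofReal_ne_top)
    refine le_trans (ENNReal.toReal_mono hfin h3) ?_
    rw [ENNReal.toReal_mul, ENNReal.toReal_mul, ENNReal.toReal_ofReal hβρ,
      ENNReal.toReal_ofReal hIg]
  -- the average of g tends to zero
  have avg_g : Tendsto (fun T : ℝ => (1 / T) * ∫ s in (0:ℝ)..T, g s) atTop (nhds 0) := by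
    obtain ⟨Cy, hCy⟩ := hybdd
    have hD : (0:ℝ) < max Cy 0 + 1 := by positivity
    set D : ℝ := max Cy 0 + 1 with hDdef
    have hCyD : ∀ᶠ T in atTop, (1 / T) * ∫ s in (0:ℝ)..T, ‖y s‖ ^ 2 ≤ D :=
      hCy.mono fun T hT => hT.trans (by simp only [hDdef]; nlinarith [le_max_left Cy (0:ℝ)])
    rw [Metric.tendsto_nhds]
    intro ε hε
    set δ : ℝ := Real.sqrt (ε / (2 * D)) with hδdef
    have hδpos : 0 < δ := Real.sqrt_pos.2 (by positivity)
    have hδsq : δ ^ 2 = ε / (2 * D) := Real.sq_sqrt (by positivity)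
    have hBsmall : ∀ᶠ s in atTop, ‖B s‖ < δ := by
      have h := Metric.tendsto_nhds.1 hBconv δ hδpos
      exact h.mono fun s hs => by rwa [dist_zero_right] at hs
    obtain ⟨S₀, hS₀⟩ := eventually_atTop.1 hBsmall
    have hS₁pos : (0:ℝ) < max S₀ 1 := lt_of_lt_of_le one_pos (le_max_right _ _)
    set S₁ : ℝ := max S₀ 1 with hS₁def
    set KS : ℝ := ∫ s in (0:ℝ)..S₁, g s with hKSdef
    have hKSnn : 0 ≤ KS := intervalIntegral.integral_nonneg hS₁pos.le fun s _ => hgnn s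
    have h1 : Tendsto (fun T : ℝ => KS / T) atTop (nhds 0) :=
      tendsto_const_nhds.div_atTop tendsto_id
    have h2 : ∀ᶠ T in atTop, KS / T < ε / 2 :=
      h1.eventually_lt_const (by positivity)
    filter_upwards [hCyD, h2, eventually_ge_atTop S₁, eventually_gt_atTop 0] with T hTD hTKS hTS hT0
    have hg0T : IntervalIntegrable g volume 0 T :=
      ⟨hgint T, by rw [Set.Ioc_eq_empty (not_lt.mpr hT0.le)]; exact integrableOn_empty⟩
    have hg0S : IntervalIntegrable g volume 0 S₁ :=
      ⟨hgint S₁, by rw [Set.Ioc_eq_empty (not_lt.mpr hS₁pos.le)]; exact integrableOn_empty⟩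
    have hsub : Set.uIcc S₁ T ⊆ Set.uIcc 0 T := by
      rw [Set.uIcc_of_le hT0.le, Set.uIcc_of_le hTS]
      exact Set.Icc_subset_Icc hS₁pos.le le_rfl
    have hgST : IntervalIntegrable g volume S₁ T := hg0T.mono_set hsub
    have hy0T : IntervalIntegrable (fun s => ‖y s‖ ^ 2) volume 0 T := hyloc T hT0
    have hy0S : IntervalIntegrable (fun s => ‖y s‖ ^ 2) volume 0 S₁ := hyloc S₁ hS₁pos
    have hyST : IntervalIntegrable (fun s => ‖y s‖ ^ 2) volume S₁ T := hy0T.mono_set hsub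
    have hsplit : (∫ s in (0:ℝ)..T, g s) = KS + ∫ s in S₁..T, g s :=
      (intervalIntegral.integral_add_adjacent_intervals hg0S hgST).symm
    have htail : (∫ s in S₁..T, g s) ≤ δ ^ 2 * ∫ s in S₁..T, ‖y s‖ ^ 2 := by
      rw [← intervalIntegral.integral_const_mul]
      refine intervalIntegral.integral_mono_on hTS hgST (hyST.const_mul _) fun s hs => ?_
      have hBs : ‖B s‖ ≤ δ := (hS₀ s (le_trans (le_max_left _ _) hs.1)).le
      have h1' : ‖q s‖ ≤ ‖B s‖ * ‖y s‖ := (B s).le_opNorm (y s)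
      have hgs : g s = ‖q s‖ ^ 2 := rfl
      rw [hgs]
      have h2' : ‖q s‖ ≤ δ * ‖y s‖ :=
        h1'.trans (mul_le_mul_of_nonneg_right hBs (norm_nonneg _))
      exact (pow_le_pow_left₀ (norm_nonneg _) h2' 2).trans (le_of_eq (mul_pow δ _ 2))
    have htail2 : (∫ s in S₁..T, ‖y s‖ ^ 2) ≤ ∫ s in (0:ℝ)..T, ‖y s‖ ^ 2 := by
      have hsp := intervalIntegral.integral_add_adjacent_intervals hy0S hyST
      have h0S : 0 ≤ ∫ s in (0:ℝ)..S₁, ‖y s‖ ^ 2 :=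
        intervalIntegral.integral_nonneg hS₁pos.le fun s _ => sq_nonneg _
      linarith
    have havg_nn : 0 ≤ (1 / T) * ∫ s in (0:ℝ)..T, g s :=
      mul_nonneg (by positivity) (intervalIntegral.integral_nonneg hT0.le fun s _ => hgnn s)
    rw [Real.dist_eq, sub_zero, abs_of_nonneg havg_nn]
    have hstep : (1 / T) * ∫ s in (0:ℝ)..T, g s ≤ KS / T + δ ^ 2 * D := by
      have hTinv : (0:ℝ) ≤ 1 / T := by positivity
      have e1 : (∫ s in S₁..T, g s) ≤ δ ^ 2 * ∫ s in (0:ℝ)..T, ‖y s‖ ^ 2 :=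
        htail.trans (mul_le_mul_of_nonneg_left htail2 (sq_nonneg δ))
      calc (1 / T) * ∫ s in (0:ℝ)..T, g s
          = (1 / T) * KS + (1 / T) * ∫ s in S₁..T, g s := by rw [hsplit]; ring
      _ ≤ (1 / T) * KS + (1 / T) * (δ ^ 2 * ∫ s in (0:ℝ)..T, ‖y s‖ ^ 2) := by
            have := mul_le_mul_of_nonneg_left e1 hTinv
            linarith
      _ = KS / T + δ ^ 2 * ((1 / T) * ∫ s in (0:ℝ)..T, ‖y s‖ ^ 2) := by ring
      _ ≤ KS / T + δ ^ 2 * D :=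
            add_le_add_right (mul_le_mul_of_nonneg_left hTD (sq_nonneg δ)) _
    have hδD : δ ^ 2 * D = ε / 2 := by
      rw [hδsq]
      field_simp
    have hfin : KS / T + δ ^ 2 * D < ε := by rw [hδD]; linarith
    exact lt_of_le_of_lt hstep hfin
  -- squeeze
  have upper_tendsto : Tendsto (fun T : ℝ =>
      (β / ρ) * (β / ρ) * ((1 / T) * ∫ s in (0:ℝ)..T, g s)) atTop (nhds 0) := by
    simpa using avg_g.const_mul ((β / ρ) * (β / ρ))
  refine tendsto_of_tendsto_of_tendsto_of_le_of_le' tendsto_const_nhds upper_tendsto ?_ ?_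
  · filter_upwards [eventually_gt_atTop (0:ℝ)] with T hT
    exact mul_nonneg (by positivity)
      (intervalIntegral.integral_nonneg hT.le fun t _ => sq_nonneg _)
  · filter_upwards [eventually_gt_atTop (0:ℝ)] with T hT
    have h := main T hT
    have hTinv : (0:ℝ) ≤ 1 / T := by positivity
    calc (1 / T) * ∫ t in (0:ℝ)..T,
          ‖∫ s in (0:ℝ)..t, (NormedSpace.exp ((t - s) • A)) (B s (y s))‖ ^ 2
        ≤ (1 / T) * ((β / ρ) * ((β / ρ) * ∫ s in Set.Ioc 0 T, g s)) :=
          mul_le_mul_of_nonneg_left h hTinv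
    _ = (β / ρ) * (β / ρ) * ((1 / T) * ∫ s in (0:ℝ)..T, g s) := by
          rw [intervalIntegral.integral_of_le hT.le]
          ring
end
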